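/- arXiv:1401.3503 — 8 statements merged into one kernel-verified Lean document; each statement's English description precedes it below -/
import Mathlib

section
/- Let z_1,…,z_{2n} be a representation of the quantum quaternion sphere relations on a complex Hilbert space H. Then ‖z_i‖ ≤ 1 for every i ∈ {1,…,2n}, and z_{2n} is a normal operator, i.e. z_{2n}* z_{2n} = z_{2n} z_{2n}*. -/
noncomputable section

variable {H : Type*} [NormedAddCommGroup H] [InnerProductSpace ℂ H] [CompleteSpace H]

/-- The adjoint of a bounded operator on a complex Hilbert space. -/
def adj (T : H →L[ℂ] H) : H →L[ℂ] H := ContinuousLinearMap.adjoint T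

/-- `i′ = 2n + 1 − i`. -/
def dualIdx (n i : ℕ) : ℕ := 2 * n + 1 - i

/-- `ρ_i = n + 1 − i` for `i ≤ n`, and `ρ_i = n − i` (that is, `−ρ_{i′}`) for `i > n`. -/
def rhoIdx (n i : ℕ) : ℤ := if i ≤ n then (n : ℤ) + 1 - (i : ℤ) else (n : ℤ) - (i : ℤ)

/-- `ε_i = 1` for `i ≤ n`, `ε_i = −1` for `i > n`. -/
def epsIdx (n i : ℕ) : ℤ := if i ≤ n then 1 else -1

/-- A representation of the quantum quaternion sphere relations on a complex Hilbert
space `H`: bounded operators `z 1, …, z (2n)` satisfying relations (R1)–(R8). -/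
structure QQSRep (q : ℝ) (n : ℕ) (z : ℕ → H →L[ℂ] H) : Prop where
  r1 : ∀ i j, 1 ≤ j → j < i → i ≤ 2 * n → i + j ≠ 2 * n + 1 →
      z i * z j = (q : ℂ) • (z j * z i)
  r2 : ∀ i, n < i → i ≤ 2 * n →
      z i * z (dualIdx n i) = ((q : ℂ) ^ 2) • (z (dualIdx n i) * z i)
        - ((1 - q ^ 2 : ℝ) : ℂ) • ∑ k ∈ Finset.Ioc i (2 * n),
            ((q : ℂ) ^ ((i : ℤ) - (k : ℤ))) • (z k * z (dualIdx n k))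
  r3 : ∀ i, 1 ≤ i → i ≤ 2 * n →
      adj (z i) * z (dualIdx n i) = ((q : ℂ) ^ 2) • (z (dualIdx n i) * adj (z i))
  r4 : ∀ i j, 1 ≤ i → i ≤ 2 * n → 1 ≤ j → j ≤ 2 * n → 2 * n + 1 < i + j → i ≠ j →
      adj (z i) * z j = (q : ℂ) • (z j * adj (z i))
  r5 : ∀ i j, 1 ≤ i → 1 ≤ j → i + j < 2 * n + 1 → i ≠ j →
      adj (z i) * z j = (q : ℂ) • (z j * adj (z i))
        + (((1 - q ^ 2 : ℝ) : ℂ) * ((epsIdx n i * epsIdx n j : ℤ) : ℂ)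
            * (q : ℂ) ^ (rhoIdx n i + rhoIdx n j)) • (z (dualIdx n i) * adj (z (dualIdx n j)))
  r6 : ∀ i, n < i → i ≤ 2 * n →
      adj (z i) * z i = z i * adj (z i)
        + ((1 - q ^ 2 : ℝ) : ℂ) • ∑ k ∈ Finset.Ioc i (2 * n), z k * adj (z k)
  r7 : ∀ i, 1 ≤ i → i ≤ n →
      adj (z i) * z i = z i * adj (z i)
        + (((1 - q ^ 2 : ℝ) : ℂ) * (q : ℂ) ^ (2 * rhoIdx n i)) •
            (z (dualIdx n i) * adj (z (dualIdx n i)))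
        + ((1 - q ^ 2 : ℝ) : ℂ) • ∑ k ∈ Finset.Ioc i (2 * n), z k * adj (z k)
  r8 : ∑ i ∈ Finset.Icc 1 (2 * n), z i * adj (z i) = 1

/-- Irreducibility: the only closed subspaces invariant under all `z i` and `(z i)*`
are `{0}` and `H`. -/
def QQSIrreducible (n : ℕ) (z : ℕ → H →L[ℂ] H) : Prop :=
  ∀ K : Submodule ℂ H, IsClosed (K : Set H) →
    (∀ i, 1 ≤ i → i ≤ 2 * n → ∀ h ∈ K, z i h ∈ K ∧ adj (z i) h ∈ K) →
    K = ⊥ ∨ K = ⊤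

theorem stmt_2 (q : ℝ) (hq0 : 0 < q) (hq1 : q < 1) (n : ℕ) (hn : 1 ≤ n)
    (z : ℕ → H →L[ℂ] H) (hz : QQSRep q n z) :
    (∀ i, 1 ≤ i → i ≤ 2 * n → ‖z i‖ ≤ 1) ∧
      adj (z (2 * n)) * z (2 * n) = z (2 * n) * adj (z (2 * n)) := by
  constructor
  · intro i hi1 hi2
    have hadj : ‖adj (z i)‖ ≤ 1 := by
      apply ContinuousLinearMap.opNorm_le_bound _ zero_le_one
      intro x
      have hsum : ∑ k ∈ Finset.Icc 1 (2 * n), ‖adj (z k) x‖ ^ 2 = ‖x‖ ^ 2 := by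
        have h8 := congrArg (fun T : H →L[ℂ] H => (inner ℂ (T x) x : ℂ)) hz.r8
        simp only [ContinuousLinearMap.one_apply, ContinuousLinearMap.sum_apply,
          sum_inner, ContinuousLinearMap.mul_apply] at h8
        have hterm : ∀ k ∈ Finset.Icc 1 (2 * n),
            (inner ℂ (z k (adj (z k) x)) x : ℂ) = ((‖adj (z k) x‖ : ℂ)) ^ 2 := by
          intro k _
          rw [show (inner ℂ (z k (adj (z k) x)) x : ℂ)
              = inner ℂ ((adj (z k)) x) ((ContinuousLinearMap.adjoint (z k)) x) from
            (ContinuousLinearMap.adjoint_inner_right (z k) _ _).symm]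
          simp [adj, inner_self_eq_norm_sq_to_K]
        rw [Finset.sum_congr rfl hterm] at h8
        have h8' := congrArg Complex.re h8
        rw [inner_self_eq_norm_sq_to_K] at h8'
        simpa [← Complex.ofReal_pow] using h8'
      have hle : ‖adj (z i) x‖ ^ 2 ≤ ‖x‖ ^ 2 := by
        rw [← hsum]
        exact Finset.single_le_sum (f := fun k => ‖adj (z k) x‖ ^ 2) (fun k _ => sq_nonneg _) (Finset.mem_Icc.mpr ⟨hi1, hi2⟩)
      calc ‖adj (z i) x‖ ≤ ‖x‖ := by
            nlinarith [norm_nonneg ((adj (z i)) x), norm_nonneg x]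
        _ = 1 * ‖x‖ := (one_mul _).symm
    have : ‖z i‖ = ‖adj (z i)‖ := by
      simp only [adj]
      exact (LinearIsometryEquiv.norm_map ContinuousLinearMap.adjoint (z i)).symm
    rw [this]; exact hadj
  · have h6 := hz.r6 (2 * n) (by omega) le_rfl
    simpa using h6
end
end

section
/- Let z_1,…,z_{2n} be a representation of the quantum quaternion sphere relations on a complex Hilbert space H, and write ω = z_{2n}* z_{2n}. Then for every i ∉ {1, 2n} one has z_i ω = q^{−2} ω z_i and z_i* ω = q² ω z_i*, while z_1 ω = q^{−4} ω z_1 and z_1* ω = q⁴ ω z_1*. -/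
noncomputable section

variable {H : Type*} [NormedAddCommGroup H] [InnerProductSpace ℂ H] [CompleteSpace H]

lemma adj_eq_star (T : H →L[ℂ] H) : adj T = star T :=
  (ContinuousLinearMap.star_eq_adjoint T).symm

lemma star_rel (c : ℂ) (hc : star c = c) (A B : H →L[ℂ] H) (h : A * B = c • (B * A)) :
    star B * star A = c • (star A * star B) := by
  have := congrArg star h
  simpa [star_smul, hc] using this

lemma key1 (c : ℂ) (hc : c ≠ 0) (A B X : H →L[ℂ] H)
    (h1 : A * X = c • (X * A)) (h2 : B * X = c • (X * B)) :
    X * (B * A) = (c ^ 2)⁻¹ • ((B * A) * X) := by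
  have h : (B * A) * X = c ^ 2 • (X * (B * A)) := by
    calc (B * A) * X = B * (A * X) := by rw [mul_assoc]
    _ = B * (c • (X * A)) := by rw [h1]
    _ = c • ((B * X) * A) := by rw [mul_smul_comm, mul_assoc]
    _ = c • ((c • (X * B)) * A) := by rw [h2]
    _ = c ^ 2 • (X * (B * A)) := by rw [smul_mul_assoc, smul_smul, mul_assoc, ← sq]
  rw [h, smul_smul, inv_mul_cancel₀ (pow_ne_zero 2 hc), one_smul]

lemma key2 (c : ℂ) (A B X : H →L[ℂ] H)
    (h1 : X * A = c • (A * X)) (h2 : X * B = c • (B * X)) :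
    X * (B * A) = c ^ 2 • ((B * A) * X) := by
  calc X * (B * A) = (X * B) * A := (mul_assoc _ _ _).symm
  _ = c • (B * (X * A)) := by rw [h2, smul_mul_assoc, mul_assoc]
  _ = c • (B * (c • (A * X))) := by rw [h1]
  _ = c ^ 2 • ((B * A) * X) := by rw [mul_smul_comm, smul_smul, ← mul_assoc, ← sq]

theorem stmt_3 (q : ℝ) (hq0 : 0 < q) (hq1 : q < 1) (n : ℕ) (hn : 1 ≤ n)
    (z : ℕ → H →L[ℂ] H) (hz : QQSRep q n z) :
    (∀ i, 1 ≤ i → i ≤ 2 * n → i ≠ 1 → i ≠ 2 * n →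
        z i * (adj (z (2 * n)) * z (2 * n))
            = ((q : ℂ) ^ (-2 : ℤ)) • ((adj (z (2 * n)) * z (2 * n)) * z i) ∧
        adj (z i) * (adj (z (2 * n)) * z (2 * n))
            = ((q : ℂ) ^ (2 : ℤ)) • ((adj (z (2 * n)) * z (2 * n)) * adj (z i))) ∧
    z 1 * (adj (z (2 * n)) * z (2 * n))
        = ((q : ℂ) ^ (-4 : ℤ)) • ((adj (z (2 * n)) * z (2 * n)) * z 1) ∧
    adj (z 1) * (adj (z (2 * n)) * z (2 * n))
        = ((q : ℂ) ^ (4 : ℤ)) • ((adj (z (2 * n)) * z (2 * n)) * adj (z 1)) := by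
  
  have hq : (q : ℂ) ≠ 0 := by exact_mod_cast hq0.ne'
  have hqc : star (q : ℂ) = (q : ℂ) := by simp [Complex.star_def, Complex.conj_ofReal]
  have hqc2 : star ((q : ℂ) ^ 2) = (q : ℂ) ^ 2 := by
    simp [Complex.star_def, map_pow, Complex.conj_ofReal]
  have e2 : ((q : ℂ)) ^ (-2 : ℤ) = (((q : ℂ)) ^ 2)⁻¹ := by rw [zpow_neg]; norm_cast
  have e2p : ((q : ℂ)) ^ (2 : ℤ) = ((q : ℂ)) ^ 2 := by norm_cast
  have e4 : ((q : ℂ)) ^ (-4 : ℤ) = ((((q : ℂ)) ^ 2) ^ 2)⁻¹ := by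
    rw [zpow_neg, ← pow_mul]; norm_cast
  have e4p : ((q : ℂ)) ^ (4 : ℤ) = (((q : ℂ)) ^ 2) ^ 2 := by rw [← pow_mul]; norm_cast
  refine ⟨?_, ?_, ?_⟩
  · intro i hi1 hi2n hne1 hne2n
    have h1 := hz.r1 (2 * n) i hi1 (by omega) le_rfl (by omega)
    have h4 := hz.r4 (2 * n) i (by omega) le_rfl hi1 hi2n (by omega) (by omega)
    rw [adj_eq_star] at h4
    simp only [adj_eq_star]
    rw [e2, e2p]
    constructor
    · exact key1 (q : ℂ) hq (z (2 * n)) (star (z (2 * n))) (z i) h1 h4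
    · have h1s := star_rel (q : ℂ) hqc _ _ h1
      have h4s := star_rel (q : ℂ) hqc _ _ h4
      rw [star_star] at h4s
      exact key2 (q : ℂ) (z (2 * n)) (star (z (2 * n))) (star (z i)) h4s h1s
  all_goals {
    have hd : dualIdx n (2 * n) = 1 := by unfold dualIdx; omega
    have h2 := hz.r2 (2 * n) (by omega) le_rfl
    have h3 := hz.r3 (2 * n) (by omega) le_rfl
    rw [hd, Finset.Ioc_self, Finset.sum_empty, smul_zero, sub_zero] at h2
    rw [hd, adj_eq_star] at h3
    simp only [adj_eq_star]
    first
    | { rw [e4]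
        exact key1 ((q : ℂ) ^ 2) (pow_ne_zero 2 hq) (z (2 * n)) (star (z (2 * n))) (z 1) h2 h3 }
    | { rw [e4p]
        have h2s := star_rel ((q : ℂ) ^ 2) hqc2 _ _ h2
        have h3s := star_rel ((q : ℂ) ^ 2) hqc2 _ _ h3
        rw [star_star] at h3s
        exact key2 ((q : ℂ) ^ 2) (z (2 * n)) (star (z (2 * n))) (star (z 1)) h3s h2s }
  }
end
end

section
/- Let z_1,…,z_{2n} be a representation of the quantum quaternion sphere relations on a complex Hilbert space H. Then for every i ∈ {1,…,2n} and every k ≥ i one has ker z_i ⊆ ker z_k*; that is, if z_i h = 0 then z_k* h = 0 for all k ≥ i. -/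
noncomputable section

variable {H : Type*} [NormedAddCommGroup H] [InnerProductSpace ℂ H] [CompleteSpace H]

lemma inner_key (T : H →L[ℂ] H) (h : H) :
    (inner ℂ (T (adj T h)) h : ℂ) = ((‖adj T h‖ ^ 2 : ℝ) : ℂ) := by
  rw [adj, ← ContinuousLinearMap.adjoint_inner_right, inner_self_eq_norm_sq_to_K]
  norm_cast

theorem stmt_6 (q : ℝ) (hq0 : 0 < q) (hq1 : q < 1) (n : ℕ) (hn : 1 ≤ n)
    (z : ℕ → H →L[ℂ] H) (hz : QQSRep q n z) :
    ∀ i k, 1 ≤ i → i ≤ k → k ≤ 2 * n → ∀ h : H, z i h = 0 → adj (z k) h = 0 := by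
  intro i k hi hik hk h hzi
  have hi2n : i ≤ 2 * n := le_trans hik hk
  have hqpos : 0 < 1 - q ^ 2 := by nlinarith
  have hsumnn : (0:ℝ) ≤ ∑ m ∈ Finset.Ioc i (2*n), ‖adj (z m) h‖^2 :=
    Finset.sum_nonneg fun m _ => sq_nonneg _
  have key : ‖adj (z i) h‖^2 + (1 - q^2) * ∑ m ∈ Finset.Ioc i (2*n), ‖adj (z m) h‖^2 ≤ 0 := by
    by_cases hin : n < i
    · have E := congrArg (fun T : H →L[ℂ] H => (inner ℂ (T h) h : ℂ)) (hz.r6 i hin hi2n)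
      simp only [ContinuousLinearMap.mul_apply, ContinuousLinearMap.add_apply,
        ContinuousLinearMap.smul_apply, ContinuousLinearMap.sum_apply, hzi, map_zero,
        inner_zero_left, inner_add_left, inner_smul_left, sum_inner, inner_key] at E
      have E2 : ((0:ℝ):ℂ) = ((‖adj (z i) h‖^2
          + (1 - q^2) * ∑ m ∈ Finset.Ioc i (2*n), ‖adj (z m) h‖^2 : ℝ) : ℂ) := by
        push_cast
        rw [E]; ring_nf
        simp [Complex.conj_ofReal]
        ring
      have := (Complex.ofReal_inj.mp E2).symm
      linarith [this]
    · push_neg at hin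
      have E := congrArg (fun T : H →L[ℂ] H => (inner ℂ (T h) h : ℂ)) (hz.r7 i hi hin)
      simp only [ContinuousLinearMap.mul_apply, ContinuousLinearMap.add_apply,
        ContinuousLinearMap.smul_apply, ContinuousLinearMap.sum_apply, hzi, map_zero,
        inner_zero_left, inner_add_left, inner_smul_left, sum_inner, inner_key] at E
      have E2 : ((0:ℝ):ℂ) = ((‖adj (z i) h‖^2
          + ((1 - q^2) * q ^ (2 * rhoIdx n i)) * ‖adj (z (dualIdx n i)) h‖^2
          + (1 - q^2) * ∑ m ∈ Finset.Ioc i (2*n), ‖adj (z m) h‖^2 : ℝ) : ℂ) := by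
        push_cast
        rw [E]; ring_nf
        simp [Complex.conj_ofReal]
        ring
      have E3 := (Complex.ofReal_inj.mp E2).symm
      have hz2 : 0 ≤ ((1 - q^2) * q ^ (2 * rhoIdx n i)) * ‖adj (z (dualIdx n i)) h‖^2 := by
        positivity
      linarith
  have hall : ∀ m ∈ Finset.Ioc i (2*n), ‖adj (z m) h‖^2 = 0 := by
    have hsz : ∑ m ∈ Finset.Ioc i (2*n), ‖adj (z m) h‖^2 = 0 := by nlinarith [sq_nonneg ‖adj (z i) h‖]
    exact (Finset.sum_eq_zero_iff_of_nonneg fun m _ => sq_nonneg _).mp hsz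
  have hki : ‖adj (z k) h‖^2 = 0 := by
    rcases eq_or_lt_of_le hik with rfl | hlt
    · nlinarith [sq_nonneg ‖adj (z i) h‖]
    · exact hall k (Finset.mem_Ioc.mpr ⟨hlt, hk⟩)
  simpa using pow_eq_zero_iff (n := 2) (by norm_num) |>.mp hki
end
end

section
/- Let z_1,…,z_{2n} be a representation of the quantum quaternion sphere relations on a complex Hilbert space H, and write ω = z_{2n}* z_{2n}. If u ∈ H is a nonzero vector with ω u = q^{2m} u for some m ∈ ℕ, then z_i u ≠ 0 for every i with 1 ≤ i ≤ 2n−1. -/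
noncomputable section

variable {H : Type*} [NormedAddCommGroup H] [InnerProductSpace ℂ H] [CompleteSpace H]

lemma inner_TadjT (T : H →L[ℂ] H) (u : H) :
    (inner ℂ u ((T * adj T) u) : ℂ) = ((‖adj T u‖ ^ 2 : ℝ) : ℂ) := by
  rw [ContinuousLinearMap.mul_apply,
    ← ContinuousLinearMap.adjoint_inner_left T (adj T u) u]
  rw [show ContinuousLinearMap.adjoint T = adj T from rfl, inner_self_eq_norm_sq_to_K]
  norm_cast

theorem stmt_7 (q : ℝ) (hq0 : 0 < q) (hq1 : q < 1) (n : ℕ) (hn : 1 ≤ n)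
    (z : ℕ → H →L[ℂ] H) (hz : QQSRep q n z) :
    ∀ (m : ℕ) (u : H), u ≠ 0 →
      (adj (z (2 * n)) * z (2 * n)) u = ((q ^ (2 * m) : ℝ) : ℂ) • u →
      ∀ i, 1 ≤ i → i ≤ 2 * n - 1 → z i u ≠ 0 := by
  intro m u hu hω i hi1 hi2 hzi
  have hq2 : (0:ℝ) < 1 - q ^ 2 := by nlinarith
  have h2n : 2 * n ∈ Finset.Ioc i (2 * n) := by
    simp only [Finset.mem_Ioc]; omega
  have hL : (inner ℂ u ((adj (z i) * z i) u) : ℂ) = 0 := by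
    rw [ContinuousLinearMap.mul_apply, hzi, map_zero, inner_zero_right]
  set S : ℝ := ∑ k ∈ Finset.Ioc i (2 * n), ‖adj (z k) u‖ ^ 2 with hSdef
  have hS : S = 0 := by
    have hSnn : 0 ≤ S := Finset.sum_nonneg fun k _ => sq_nonneg _
    by_cases hin : n < i
    · have E := hz.r6 i hin (by omega)
      have E2 : (inner ℂ u ((adj (z i) * z i) u) : ℂ)
          = ((‖adj (z i) u‖ ^ 2 + (1 - q ^ 2) * S : ℝ) : ℂ) := by
        rw [E]
        simp only [ContinuousLinearMap.add_apply, ContinuousLinearMap.smul_apply,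
          ContinuousLinearMap.sum_apply, inner_add_right, inner_smul_right, inner_sum,
          inner_TadjT, hSdef]
        push_cast
        ring
      rw [hL] at E2
      have h0 : ‖adj (z i) u‖ ^ 2 + (1 - q ^ 2) * S = 0 := by exact_mod_cast E2.symm
      nlinarith [sq_nonneg ‖adj (z i) u‖]
    · push_neg at hin
      have E := hz.r7 i hi1 hin
      have hcoef : (((1 - q ^ 2 : ℝ) : ℂ) * (q : ℂ) ^ (2 * rhoIdx n i))
          = (((1 - q ^ 2) * q ^ (2 * rhoIdx n i) : ℝ) : ℂ) := by
        push_cast; ring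
      have E2 : (inner ℂ u ((adj (z i) * z i) u) : ℂ)
          = ((‖adj (z i) u‖ ^ 2
              + (1 - q ^ 2) * q ^ (2 * rhoIdx n i) * ‖adj (z (dualIdx n i)) u‖ ^ 2
              + (1 - q ^ 2) * S : ℝ) : ℂ) := by
        rw [E]
        simp only [ContinuousLinearMap.add_apply, ContinuousLinearMap.smul_apply,
          ContinuousLinearMap.sum_apply, inner_add_right, inner_smul_right, inner_sum,
          inner_TadjT, hcoef, hSdef]
        push_cast
        ring
      rw [hL] at E2
      have h0 : ‖adj (z i) u‖ ^ 2
          + (1 - q ^ 2) * q ^ (2 * rhoIdx n i) * ‖adj (z (dualIdx n i)) u‖ ^ 2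
          + (1 - q ^ 2) * S = 0 := by exact_mod_cast E2.symm
      have hqz : (0:ℝ) < q ^ (2 * rhoIdx n i) := zpow_pos hq0 _
      nlinarith [sq_nonneg ‖adj (z i) u‖,
        mul_nonneg (mul_nonneg hq2.le hqz.le) (sq_nonneg ‖adj (z (dualIdx n i)) u‖)]
  have hterm : ‖adj (z (2 * n)) u‖ ^ 2 = 0 :=
    (Finset.sum_eq_zero_iff_of_nonneg (fun k _ => sq_nonneg ‖adj (z k) u‖)).mp hS (2 * n) h2n
  have hadj0 : adj (z (2 * n)) u = 0 := by
    have := pow_eq_zero_iff (n := 2) (by norm_num) |>.mp hterm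
    simpa using this
  have E6 := hz.r6 (2 * n) (by omega) le_rfl
  rw [Finset.Ioc_self, Finset.sum_empty, smul_zero, add_zero] at E6
  have h0 : (adj (z (2 * n)) * z (2 * n)) u = 0 := by
    rw [E6, ContinuousLinearMap.mul_apply, hadj0, map_zero]
  rw [hω] at h0
  rcases smul_eq_zero.mp h0 with h | h
  · have : (q : ℝ) ^ (2 * m) = 0 := by exact_mod_cast h
    exact absurd this (pow_ne_zero _ hq0.ne')
  · exact hu h
end
end

section
/- Let z_1,…,z_{2n} be a representation of the quantum quaternion sphere relations on a complex Hilbert space H. If u ∈ ⋂_{i=1}^{2n−1} ker z_i* (i.e. z_i* u = 0 for all 1 ≤ i ≤ 2n−1), then z_{2n} u ∈ ⋂_{i=1}^{2n−1} ker z_i* and z_{2n}* u ∈ ⋂_{i=1}^{2n−1} ker z_i*. -/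
noncomputable section

variable {H : Type*} [NormedAddCommGroup H] [InnerProductSpace ℂ H] [CompleteSpace H]

theorem stmt_9 (q : ℝ) (hq0 : 0 < q) (hq1 : q < 1) (n : ℕ) (hn : 1 ≤ n)
    (z : ℕ → H →L[ℂ] H) (hz : QQSRep q n z) :
    ∀ u : H, (∀ i, 1 ≤ i → i ≤ 2 * n - 1 → adj (z i) u = 0) →
      (∀ i, 1 ≤ i → i ≤ 2 * n - 1 → adj (z i) (z (2 * n) u) = 0) ∧
      (∀ i, 1 ≤ i → i ≤ 2 * n - 1 → adj (z i) (adj (z (2 * n)) u) = 0) := by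
  intro u hu
  have hstar : ∀ T : H →L[ℂ] H, adj T = star T :=
    fun T => (ContinuousLinearMap.star_eq_adjoint T).symm
  constructor
  · intro i hi1 hi2
    rcases eq_or_lt_of_le hi1 with h1 | h1
    · -- i = 1, use R3
      have hd : dualIdx n 1 = 2 * n := by simp [dualIdx]
      have heq := hz.r3 1 le_rfl (by omega)
      rw [hd] at heq
      have h := congrArg (fun T : H →L[ℂ] H => T u) heq
      simp only [ContinuousLinearMap.mul_apply, ContinuousLinearMap.smul_apply] at h
      rw [← h1, h, hu 1 le_rfl (by omega), map_zero, smul_zero]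
    · -- i ≥ 2, use R4
      have heq := hz.r4 i (2 * n) hi1 (by omega) (by omega) le_rfl (by omega) (by omega)
      have h := congrArg (fun T : H →L[ℂ] H => T u) heq
      simp only [ContinuousLinearMap.mul_apply, ContinuousLinearMap.smul_apply] at h
      rw [h, hu i hi1 hi2, map_zero, smul_zero]
  · intro i hi1 hi2
    rcases eq_or_lt_of_le hi1 with h1 | h1
    · -- i = 1, use R2 at 2n
      have hd : dualIdx n (2 * n) = 1 := by simp [dualIdx]
      have heq := hz.r2 (2 * n) (by omega) le_rfl
      rw [hd, Finset.Ioc_self, Finset.sum_empty, smul_zero, sub_zero] at heq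
      have h2 := congrArg star heq
      simp only [star_mul, star_smul, star_pow, Complex.star_def, Complex.conj_ofReal] at h2
      have h := congrArg (fun T : H →L[ℂ] H => T u) h2
      simp only [ContinuousLinearMap.mul_apply, ContinuousLinearMap.smul_apply] at h
      rw [← h1, hstar (z 1), hstar (z (2 * n)), h]
      have h0 := hu 1 le_rfl (by omega)
      rw [hstar (z 1)] at h0
      rw [h0, map_zero, smul_zero]
    · -- i ≥ 2, use R1
      have heq := hz.r1 (2 * n) i hi1 (by omega) le_rfl (by omega)
      have h2 := congrArg star heq
      simp only [star_mul, star_smul, Complex.star_def, Complex.conj_ofReal] at h2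
      have h := congrArg (fun T : H →L[ℂ] H => T u) h2
      simp only [ContinuousLinearMap.mul_apply, ContinuousLinearMap.smul_apply] at h
      rw [hstar (z i), hstar (z (2 * n)), h]
      have h0 := hu i hi1 hi2
      rw [hstar (z i)] at h0
      rw [h0, map_zero, smul_zero]
end
end

section
/- Let z_1,…,z_{2n} be an irreducible representation of the quantum quaternion sphere relations on a complex Hilbert space H with z_{2n} ≠ 0. Let K be a linear subspace of ⋂_{i=1}^{2n−1} ker z_i* that is invariant under both z_{2n} and z_{2n}*. Define H^K to be the linear span of all vectors z_1^{α_1} z_2^{α_2} ⋯ z_{2n−1}^{α_{2n−1}} h with h ∈ K and (α_1,…,α_{2n−1}) ∈ ℕ^{2n−1}. Then H^K is invariant under z_i and z_i* for every i ∈ {1,…,2n}. -/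
noncomputable section

variable {H : Type*} [NormedAddCommGroup H] [InnerProductSpace ℂ H] [CompleteSpace H]

/-- The monomial operator `z_1^{α 1} z_2^{α 2} ⋯ z_m^{α m}`. -/
def wordOp (z : ℕ → H →L[ℂ] H) (m : ℕ) (α : ℕ → ℕ) : H →L[ℂ] H :=
  ((List.range m).map fun k => z (k + 1) ^ α (k + 1)).prod

set_option linter.unusedSectionVars false

set_option maxHeartbeats 1000000

def seg (z : ℕ → H →L[ℂ] H) (α : ℕ → ℕ) (a l : ℕ) : H →L[ℂ] H :=
  ((List.range' (a+1) l).map fun k => z k ^ α k).prod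

lemma seg_zero (z : ℕ → H →L[ℂ] H) (α : ℕ → ℕ) (a : ℕ) : seg z α a 0 = 1 := rfl

lemma seg_succ (z : ℕ → H →L[ℂ] H) (α : ℕ → ℕ) (a l : ℕ) :
    seg z α a (l+1) = z (a+1) ^ α (a+1) * seg z α (a+1) l := by
  simp [seg, List.range'_succ]

lemma seg_split (z : ℕ → H →L[ℂ] H) (α : ℕ → ℕ) (a l₁ l₂ : ℕ) :
    seg z α a (l₁ + l₂) = seg z α a l₁ * seg z α (a + l₁) l₂ := by
  have h := List.range'_append (s := a+1) (m := l₁) (n := l₂) (step := 1)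
  simp only [one_mul] at h
  rw [seg, seg, seg, ← List.prod_append, ← List.map_append]
  rw [show a + l₁ + 1 = a + 1 + l₁ by omega, h]

lemma seg_congr (z : ℕ → H →L[ℂ] H) (α β : ℕ → ℕ) (a l : ℕ)
    (h : ∀ k, a < k → k ≤ a + l → α k = β k) :
    seg z α a l = seg z β a l := by
  induction l generalizing a with
  | zero => rfl
  | succ l ih =>
      rw [seg_succ, seg_succ, h (a+1) (by omega) (by omega),
        ih (a+1) (fun k hk1 hk2 => h k (by omega) (by omega))]

lemma seg_one (z : ℕ → H →L[ℂ] H) (α : ℕ → ℕ) (a l : ℕ)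
    (h : ∀ k, a < k → k ≤ a + l → α k = 0) : seg z α a l = 1 := by
  induction l generalizing a with
  | zero => rfl
  | succ l ih =>
      rw [seg_succ, h (a+1) (by omega) (by omega), pow_zero, one_mul]
      exact ih (a+1) (fun k hk1 hk2 => h k (by omega) (by omega))

lemma wordOp_eq_seg (z : ℕ → H →L[ℂ] H) (m : ℕ) (α : ℕ → ℕ) :
    wordOp z m α = seg z α 0 m := by
  rw [wordOp, seg, List.range'_eq_map_range, List.map_map]
  simp [Function.comp_def, Nat.add_comm]

lemma comm_pow (z W : H →L[ℂ] H) (c : ℂ) (h : z * W = c • (W * z)) :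
    ∀ e, z * W ^ e = c ^ e • (W ^ e * z)
  | 0 => by simp
  | (e+1) => by
      rw [pow_succ, ← mul_assoc, comm_pow z W c h e, smul_mul_assoc, mul_assoc, h,
        mul_smul_comm, smul_smul, ← mul_assoc, ← pow_succ, ← pow_succ]

lemma comm_seg (z : ℕ → H →L[ℂ] H) (α : ℕ → ℕ) (T : H →L[ℂ] H) :
    ∀ (l a : ℕ), (∀ k, a < k → k ≤ a + l → ∃ c : ℂ, T * z k = c • (z k * T)) →
    ∃ c : ℂ, T * seg z α a l = c • (seg z α a l * T)
  | 0, a, _ => ⟨1, by simp [seg_zero]⟩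
  | (l+1), a, hcomm => by
      obtain ⟨c1, hc1⟩ := hcomm (a+1) (by omega) (by omega)
      obtain ⟨c2, hc2⟩ := comm_seg z α T l (a+1) (fun k h1 h2 => hcomm k (by omega) (by omega))
      refine ⟨c1 ^ α (a+1) * c2, ?_⟩
      rw [seg_succ, ← mul_assoc, comm_pow T (z (a+1)) c1 hc1, smul_mul_assoc, mul_assoc, hc2,
        mul_smul_comm, smul_smul, ← mul_assoc]

def SS (n : ℕ) (z : ℕ → H →L[ℂ] H) (K : Submodule ℂ H) : Submodule ℂ H :=
  Submodule.span ℂ {v : H | ∃ (α : ℕ → ℕ) (h : H), h ∈ K ∧ v = wordOp z (2 * n - 1) α h}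

lemma gen_mem (n : ℕ) (z : ℕ → H →L[ℂ] H) (K : Submodule ℂ H)
    (α : ℕ → ℕ) (h : H) (hh : h ∈ K) : wordOp z (2*n-1) α h ∈ SS n z K :=
  Submodule.subset_span ⟨α, h, hh, rfl⟩

lemma K_sub (n : ℕ) (z : ℕ → H →L[ℂ] H) (K : Submodule ℂ H)
    (h : H) (hh : h ∈ K) : h ∈ SS n z K := by
  have h1 : h = wordOp z (2*n-1) (fun _ => 0) h := by
    rw [wordOp_eq_seg, seg_one z _ 0 _ (fun _ _ _ => rfl), ContinuousLinearMap.one_apply]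
  rw [h1]
  exact gen_mem n z K _ h hh

lemma suffix_mem (n : ℕ) (z : ℕ → H →L[ℂ] H) (K : Submodule ℂ H)
    (a : ℕ) (α : ℕ → ℕ) (h : H) (hh : h ∈ K) :
    seg z α a (2*n-1-a) h ∈ SS n z K := by
  by_cases ham : 2*n-1 ≤ a
  · rw [show 2*n-1-a = 0 by omega, seg_zero, ContinuousLinearMap.one_apply]
    exact K_sub n z K h hh
  · set β : ℕ → ℕ := fun k => if k ≤ a then 0 else α k with hβ
    have e1 : a + (2*n-1-a) = 2*n-1 := by omega
    have h1 : wordOp z (2*n-1) β = seg z α a (2*n-1-a) := by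
      rw [wordOp_eq_seg]
      conv_lhs => rw [← e1, seg_split]
      rw [seg_one z β 0 a (fun k hk1 hk2 => by simp [hβ]; omega), one_mul, Nat.zero_add]
      exact seg_congr z β α a _ (fun k hk1 hk2 => by simp [hβ]; omega)
    have h2 := gen_mem n z K β h hh
    rwa [h1] at h2

lemma pow_suffix_mem (n : ℕ) (z : ℕ → H →L[ℂ] H) (K : Submodule ℂ H)
    (b e : ℕ) (α : ℕ → ℕ) (h : H) (hh : h ∈ K) (hb1 : 1 ≤ b) (hb2 : b ≤ 2*n-1) :
    (z b ^ e) (seg z α b (2*n-1-b) h) ∈ SS n z K := by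
  set β := Function.update α b e with hβ
  have h1 : seg z β (b-1) (2*n-1-(b-1)) = z b ^ e * seg z α b (2*n-1-b) := by
    have e1 : 2*n-1-(b-1) = (2*n-1-b) + 1 := by omega
    rw [e1, seg_succ, show b-1+1 = b by omega]
    congr 1
    · rw [hβ, Function.update_self]
    · exact seg_congr z β α b _ (fun k hk1 hk2 => by rw [hβ]; exact Function.update_of_ne (by omega) _ _)
  have h2 := suffix_mem n z K (b-1) β h hh
  rw [h1] at h2
  rwa [ContinuousLinearMap.mul_apply] at h2

lemma maps_SS (n : ℕ) (z : ℕ → H →L[ℂ] H) (K : Submodule ℂ H) (T : H →L[ℂ] H)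
    (hgen : ∀ (α : ℕ → ℕ) (h : H), h ∈ K → T (wordOp z (2*n-1) α h) ∈ SS n z K) :
    ∀ v ∈ SS n z K, T v ∈ SS n z K := by
  intro v hv
  have hle : SS n z K ≤ Submodule.comap (T : H →ₗ[ℂ] H) (SS n z K) := by
    apply Submodule.span_le.mpr
    rintro x ⟨α, h, hh, rfl⟩
    simpa using hgen α h hh
  exact hle hv

lemma push_absorb (q : ℝ) (n : ℕ) (z : ℕ → H →L[ℂ] H)
    (hz : QQSRep q n z) (i b : ℕ) (α : ℕ → ℕ)
    (hb : b < i) (hi : i ≤ 2*n-1) (hn : 1 ≤ n)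
    (hcond : ∀ k, b < k → k < i → i + k ≠ 2*n+1) :
    ∃ c : ℂ, z i * seg z α b (2*n-1-b) =
      c • (seg z (Function.update α i (α i + 1)) b (2*n-1-b) : H →L[ℂ] H) := by
  set β := Function.update α i (α i + 1) with hβ
  have e1 : 2*n-1-b = (i-1-b) + (2*n-1-(i-1)) := by omega
  obtain ⟨c, hc⟩ := comm_seg z α (z i) (i-1-b) b
    (fun k hk1 hk2 => ⟨(q:ℂ), hz.r1 i k (by omega) (by omega) (by omega)
      (hcond k (by omega) (by omega))⟩)
  have e2 : 2*n-1-(i-1) = (2*n-1-i) + 1 := by omega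
  have h2 : z i * seg z α (i-1) (2*n-1-(i-1)) = seg z β (i-1) (2*n-1-(i-1)) := by
    rw [e2, seg_succ, seg_succ, show i-1+1 = i by omega, ← mul_assoc, ← pow_succ']
    congr 1
    · congr 1
      rw [hβ, Function.update_self]
    · exact seg_congr z α β i _
        (fun k hk1 hk2 => by rw [hβ]; exact (Function.update_of_ne (by omega) _ _).symm)
  refine ⟨c, ?_⟩
  rw [e1, seg_split, seg_split, show b + (i-1-b) = i-1 by omega, ← mul_assoc, hc,
    smul_mul_assoc, mul_assoc, h2]
  rw [seg_congr z α β b (i-1-b)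
    (fun k hk1 hk2 => by rw [hβ]; exact (Function.update_of_ne (by omega) _ _).symm)]

lemma Llow (q : ℝ) (n : ℕ) (z : ℕ → H →L[ℂ] H) (K : Submodule ℂ H)
    (hz : QQSRep q n z) (hn : 1 ≤ n) (j : ℕ) (hj1 : 1 ≤ j) (hj2 : j ≤ n) :
    ∀ v ∈ SS n z K, z j v ∈ SS n z K := by
  apply maps_SS
  intro α h hh
  obtain ⟨c, hc⟩ := push_absorb q n z hz j 0 α hj1 (by omega) hn (fun k hk1 hk2 => by omega)
  have hc' : z j * seg z α 0 (2*n-1) =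
      c • (seg z (Function.update α j (α j + 1)) 0 (2*n-1) : H →L[ℂ] H) := hc
  rw [wordOp_eq_seg, ← ContinuousLinearMap.mul_apply, hc', ContinuousLinearMap.smul_apply]
  refine Submodule.smul_mem _ _ ?_
  have h2 := gen_mem n z K (Function.update α j (α j + 1)) h hh
  rwa [wordOp_eq_seg] at h2

lemma Llow_pow (q : ℝ) (n : ℕ) (z : ℕ → H →L[ℂ] H) (K : Submodule ℂ H)
    (hz : QQSRep q n z) (hn : 1 ≤ n) (j e : ℕ) (hj1 : 1 ≤ j) (hj2 : j ≤ n) :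
    ∀ v ∈ SS n z K, (z j ^ e) v ∈ SS n z K := by
  induction e with
  | zero => intro v hv; simpa using hv
  | succ e ih =>
      intro v hv
      rw [pow_succ, ContinuousLinearMap.mul_apply]
      exact ih _ (Llow q n z K hz hn j hj1 hj2 v hv)

lemma Llow_seg (q : ℝ) (n : ℕ) (z : ℕ → H →L[ℂ] H) (K : Submodule ℂ H)
    (hz : QQSRep q n z) (hn : 1 ≤ n) (α : ℕ → ℕ) :
    ∀ (l a : ℕ), a + l ≤ n → ∀ v ∈ SS n z K, (seg z α a l) v ∈ SS n z K
  | 0, a, _, v, hv => by simpa [seg_zero] using hv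
  | (l+1), a, hl, v, hv => by
      rw [seg_succ, ContinuousLinearMap.mul_apply]
      exact Llow_pow q n z K hz hn (a+1) (α (a+1)) (by omega) (by omega) _
        (Llow_seg q n z K hz hn α l (a+1) (by omega) v hv)

lemma Agt (q : ℝ) (n : ℕ) (z : ℕ → H →L[ℂ] H) (K : Submodule ℂ H)
    (hz : QQSRep q n z) (hn : 1 ≤ n)
    (hK2 : ∀ h ∈ K, z (2 * n) h ∈ K ∧ adj (z (2 * n)) h ∈ K) :
    ∀ c : ℕ, ∀ i, n < i → i ≤ 2 * n → 2 * n - i = c →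
      ∀ v ∈ SS n z K, z i v ∈ SS n z K := by
  intro c
  induction c using Nat.strong_induction_on with
  | _ c IH =>
  intro i hi1 hi2 hic
  have IHk : ∀ k, i < k → k ≤ 2 * n → ∀ v ∈ SS n z K, z k v ∈ SS n z K :=
    fun k hk1 hk2 => IH (2 * n - k) (by omega) k (by omega) hk2 rfl
  apply maps_SS
  intro α h hh
  set i' := 2*n+1-i with hi'
  have hi'1 : 1 ≤ i' := by omega
  have hi'n : i' ≤ n := by omega
  have hmem_y : ∀ e, (z i' ^ e) (seg z α i' (2*n-1-i') h) ∈ SS n z K := fun e =>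
    pow_suffix_mem n z K i' e α h hh (by omega) (by omega)
  have hQ : ∀ e, z i ((z i' ^ e) (seg z α i' (2*n-1-i') h)) ∈ SS n z K := by
    intro e
    induction e with
    | zero =>
      rw [pow_zero, ContinuousLinearMap.one_apply]
      by_cases hi2n : i = 2*n
      · obtain ⟨c0, hc0⟩ := comm_seg z α (z i) (2*n-1-i') i' (fun k hk1 hk2 =>
          ⟨(q:ℂ), hz.r1 i k (by omega) (by omega) (by omega) (by omega)⟩)
        rw [← ContinuousLinearMap.mul_apply, hc0, ContinuousLinearMap.smul_apply,
          ContinuousLinearMap.mul_apply]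
        refine Submodule.smul_mem _ _ ?_
        have hzh : z i h ∈ K := by rw [hi2n]; exact (hK2 h hh).1
        exact suffix_mem n z K i' α (z i h) hzh
      · obtain ⟨c0, hc0⟩ := push_absorb q n z hz i i' α (by omega) (by omega) hn
          (fun k hk1 hk2 => by omega)
        rw [← ContinuousLinearMap.mul_apply, hc0, ContinuousLinearMap.smul_apply]
        exact Submodule.smul_mem _ _ (suffix_mem n z K i' _ h hh)
    | succ e IHe =>
      have hyS := hmem_y e
      set y := (z i' ^ e) (seg z α i' (2*n-1-i') h) with hy
      have h1 : (z i' ^ (e+1)) (seg z α i' (2*n-1-i') h) = z i' y := by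
        rw [pow_succ', ContinuousLinearMap.mul_apply]
      rw [h1, ← ContinuousLinearMap.mul_apply]
      have hd : dualIdx n i = i' := by simp only [dualIdx, hi']
      have hr2 := hz.r2 i hi1 hi2
      rw [hd] at hr2
      rw [hr2]
      simp only [ContinuousLinearMap.sub_apply, ContinuousLinearMap.smul_apply,
        ContinuousLinearMap.mul_apply, ContinuousLinearMap.sum_apply]
      apply Submodule.sub_mem
      · exact Submodule.smul_mem _ _ (Llow q n z K hz hn i' hi'1 hi'n _ IHe)
      · refine Submodule.smul_mem _ _ (Submodule.sum_mem _ ?_)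
        intro k hk
        obtain ⟨hk1, hk2⟩ := Finset.mem_Ioc.mp hk
        refine Submodule.smul_mem _ _ ?_
        refine IHk k hk1 hk2 _ ?_
        exact Llow q n z K hz hn (dualIdx n k) (by simp only [dualIdx]; omega)
          (by simp only [dualIdx]; omega) _ hyS
  rw [wordOp_eq_seg]
  obtain ⟨c0, hc0⟩ := comm_seg z α (z i) (i'-1) 0 (fun k hk1 hk2 =>
    ⟨(q:ℂ), hz.r1 i k (by omega) (by omega) (by omega) (by omega)⟩)
  have e1 : (2*n-1) = (i'-1) + ((2*n-1-i') + 1) := by omega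
  have h4 : seg z α 0 (2*n-1) = seg z α 0 (i'-1) * (z i' ^ α i' * seg z α i' (2*n-1-i')) := by
    conv_lhs => rw [e1, seg_split]
    rw [Nat.zero_add, seg_succ, show i'-1+1 = i' by omega]
  rw [h4]
  simp only [ContinuousLinearMap.mul_apply]
  have h5 := DFunLike.congr_fun hc0 ((z i' ^ α i') ((seg z α i' (2*n-1-i')) h))
  simp only [ContinuousLinearMap.mul_apply, ContinuousLinearMap.smul_apply] at h5
  rw [h5]
  refine Submodule.smul_mem _ _ ?_
  exact Llow_seg q n z K hz hn α (i'-1) 0 (by omega) _ (hQ (α i'))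

lemma zmap (q : ℝ) (n : ℕ) (z : ℕ → H →L[ℂ] H) (K : Submodule ℂ H)
    (hz : QQSRep q n z) (hn : 1 ≤ n)
    (hK2 : ∀ h ∈ K, z (2 * n) h ∈ K ∧ adj (z (2 * n)) h ∈ K) :
    ∀ i, 1 ≤ i → i ≤ 2 * n → ∀ v ∈ SS n z K, z i v ∈ SS n z K := by
  intro i hi1 hi2
  by_cases hin : i ≤ n
  · exact Llow q n z K hz hn i hi1 hin
  · exact Agt q n z K hz hn hK2 (2*n-i) i (by omega) hi2 rfl

lemma Badj (q : ℝ) (n : ℕ) (z : ℕ → H →L[ℂ] H) (K : Submodule ℂ H)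
    (hz : QQSRep q n z) (hn : 1 ≤ n)
    (hK1 : ∀ h ∈ K, ∀ i, 1 ≤ i → i ≤ 2 * n - 1 → adj (z i) h = 0)
    (hK2 : ∀ h ∈ K, z (2 * n) h ∈ K ∧ adj (z (2 * n)) h ∈ K) :
    ∀ c : ℕ, ∀ i, 1 ≤ i → i ≤ 2 * n → 2 * n - i = c →
      ∀ v ∈ SS n z K, adj (z i) v ∈ SS n z K := by
  have zmap' := zmap q n z K hz hn hK2
  intro c
  induction c using Nat.strong_induction_on with
  | _ c IH =>
  intro i hi1 hi2 hic
  have IHl : ∀ l, i < l → l ≤ 2 * n → ∀ v ∈ SS n z K, adj (z l) v ∈ SS n z K :=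
    fun l hl1 hl2 => IH (2 * n - l) (by omega) l (by omega) hl2 rfl
  have hbase : ∀ (h' : H), h' ∈ K → adj (z i) h' ∈ SS n z K := by
    intro h' hh'
    by_cases hi2n : i = 2*n
    · rw [hi2n]
      exact K_sub n z K _ ((hK2 h' hh').2)
    · rw [hK1 h' hh' i hi1 (by omega)]
      exact (SS n z K).zero_mem
  have main : ∀ μ : ℕ, ∀ (a : ℕ) (β : ℕ → ℕ) (h' : H), h' ∈ K →
      (2*n-1-a) + (∑ k ∈ Finset.Ioc a (2*n-1), β k) ≤ μ →
      adj (z i) (seg z β a (2*n-1-a) h') ∈ SS n z K := by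
    intro μ
    induction μ with
    | zero =>
      intro a β h' hh' hμ
      rw [show 2*n-1-a = 0 by omega, seg_zero, ContinuousLinearMap.one_apply]
      exact hbase h' hh'
    | succ μ IHμ =>
      intro a β h' hh' hμ
      by_cases ham : 2*n-1 ≤ a
      · rw [show 2*n-1-a = 0 by omega, seg_zero, ContinuousLinearMap.one_apply]
        exact hbase h' hh'
      · have hsplit : ∀ γ : ℕ → ℕ, ∑ k ∈ Finset.Ioc a (2*n-1), γ k
            = γ (a+1) + ∑ k ∈ Finset.Ioc (a+1) (2*n-1), γ k := by
          intro γ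
          rw [← Finset.Icc_add_one_left_eq_Ioc, ← Finset.Ioc_insert_left (by omega : a+1 ≤ 2*n-1),
            Finset.sum_insert (by simp)]
        by_cases h0 : β (a+1) = 0
        · have e2 : 2*n-1-a = (2*n-1-(a+1)) + 1 := by omega
          rw [e2, seg_succ, h0, pow_zero, one_mul]
          refine IHμ (a+1) β h' hh' ?_
          have := hsplit β
          omega
        · obtain ⟨e, he⟩ : ∃ e, β (a+1) = e + 1 := ⟨β (a+1) - 1, by omega⟩
          set β' := Function.update β (a+1) e with hβ'
          set x := seg z β' a (2*n-1-a) h' with hx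
          have hxS : x ∈ SS n z K := by rw [hx]; exact suffix_mem n z K a β' h' hh'
          have hb1 : β' (a+1) = e := by rw [hβ']; exact Function.update_self _ _ _
          have hb2 : seg z β' (a+1) (2*n-1-(a+1)) = seg z β (a+1) (2*n-1-(a+1)) :=
            seg_congr _ _ _ _ _
              (fun k hk1 hk2 => by rw [hβ']; exact Function.update_of_ne (by omega) _ _)
          have hF : seg z β a (2*n-1-a) h' = z (a+1) x := by
            have e2 : 2*n-1-a = (2*n-1-(a+1)) + 1 := by omega
            rw [hx, e2, seg_succ, seg_succ, hb1, hb2, he, pow_succ']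
            simp only [ContinuousLinearMap.mul_apply]
          have hmx : (2*n-1-a) + (∑ k ∈ Finset.Ioc a (2*n-1), β' k) ≤ μ := by
            have h1 := hsplit β
            have h2 := hsplit β'
            have h3 : ∑ k ∈ Finset.Ioc (a+1) (2*n-1), β' k
                = ∑ k ∈ Finset.Ioc (a+1) (2*n-1), β k :=
              Finset.sum_congr rfl (fun k hk => by
                obtain ⟨hk1, hk2⟩ := Finset.mem_Ioc.mp hk
                rw [hβ']; exact Function.update_of_ne (by omega) _ _)
            omega
          have IH_self : adj (z i) x ∈ SS n z K := by
            rw [hx]; exact IHμ a β' h' hh' hmx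
          rw [hF, ← ContinuousLinearMap.mul_apply]
          have hj1 : 1 ≤ a+1 := by omega
          have hj2 : a+1 ≤ 2*n-1 := by omega
          by_cases hij : i = a+1
          · rw [← hij]
            by_cases hin : i ≤ n
            · rw [hz.r7 i hi1 hin]
              simp only [ContinuousLinearMap.add_apply, ContinuousLinearMap.smul_apply,
                ContinuousLinearMap.mul_apply, ContinuousLinearMap.sum_apply]
              refine Submodule.add_mem _ (Submodule.add_mem _ ?_ ?_) ?_
              · exact zmap' i hi1 hi2 _ IH_self
              · refine Submodule.smul_mem _ _ ?_
                refine zmap' (dualIdx n i) (by simp only [dualIdx]; omega)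
                  (by simp only [dualIdx]; omega) _ ?_
                exact IHl (dualIdx n i) (by simp only [dualIdx]; omega)
                  (by simp only [dualIdx]; omega) _ hxS
              · refine Submodule.smul_mem _ _ (Submodule.sum_mem _ ?_)
                intro k hk
                obtain ⟨hk1, hk2⟩ := Finset.mem_Ioc.mp hk
                exact zmap' k (by omega) hk2 _ (IHl k hk1 hk2 _ hxS)
            · rw [hz.r6 i (by omega) hi2]
              simp only [ContinuousLinearMap.add_apply, ContinuousLinearMap.smul_apply,
                ContinuousLinearMap.mul_apply, ContinuousLinearMap.sum_apply]
              refine Submodule.add_mem _ ?_ ?_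
              · exact zmap' i hi1 hi2 _ IH_self
              · refine Submodule.smul_mem _ _ (Submodule.sum_mem _ ?_)
                intro k hk
                obtain ⟨hk1, hk2⟩ := Finset.mem_Ioc.mp hk
                exact zmap' k (by omega) hk2 _ (IHl k hk1 hk2 _ hxS)
          · rcases lt_trichotomy (i + (a+1)) (2*n+1) with hlt | heq | hgt
            · rw [hz.r5 i (a+1) hi1 hj1 hlt hij]
              simp only [ContinuousLinearMap.add_apply, ContinuousLinearMap.smul_apply,
                ContinuousLinearMap.mul_apply]
              refine Submodule.add_mem _ ?_ ?_
              · exact Submodule.smul_mem _ _ (zmap' (a+1) hj1 (by omega) _ IH_self)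
              · refine Submodule.smul_mem _ _ ?_
                refine zmap' (dualIdx n i) (by simp only [dualIdx]; omega)
                  (by simp only [dualIdx]; omega) _ ?_
                exact IHl (dualIdx n (a+1)) (by simp only [dualIdx]; omega)
                  (by simp only [dualIdx]; omega) _ hxS
            · have hd : dualIdx n i = a+1 := by simp only [dualIdx]; omega
              rw [← hd, hz.r3 i hi1 hi2]
              simp only [ContinuousLinearMap.smul_apply, ContinuousLinearMap.mul_apply]
              refine Submodule.smul_mem _ _ ?_
              exact zmap' (dualIdx n i) (by simp only [dualIdx]; omega)
                (by simp only [dualIdx]; omega) _ IH_self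
            · rw [hz.r4 i (a+1) hi1 hi2 hj1 (by omega) hgt hij]
              simp only [ContinuousLinearMap.smul_apply, ContinuousLinearMap.mul_apply]
              exact Submodule.smul_mem _ _ (zmap' (a+1) hj1 (by omega) _ IH_self)
  apply maps_SS
  intro α h hh
  rw [wordOp_eq_seg]
  exact main ((2*n-1-0) + ∑ k ∈ Finset.Ioc 0 (2*n-1), α k) 0 α h hh le_rfl

theorem stmt_10 (q : ℝ) (hq0 : 0 < q) (hq1 : q < 1) (n : ℕ) (hn : 1 ≤ n)
    (z : ℕ → H →L[ℂ] H) (hz : QQSRep q n z)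
    (hirr : QQSIrreducible n z) (hz2n : z (2 * n) ≠ 0)
    (K : Submodule ℂ H)
    (hK1 : ∀ h ∈ K, ∀ i, 1 ≤ i → i ≤ 2 * n - 1 → adj (z i) h = 0)
    (hK2 : ∀ h ∈ K, z (2 * n) h ∈ K ∧ adj (z (2 * n)) h ∈ K) :
    ∀ i, 1 ≤ i → i ≤ 2 * n →
      ∀ v ∈ Submodule.span ℂ
          {v : H | ∃ (α : ℕ → ℕ) (h : H), h ∈ K ∧ v = wordOp z (2 * n - 1) α h},
        z i v ∈ Submodule.span ℂ
            {v : H | ∃ (α : ℕ → ℕ) (h : H), h ∈ K ∧ v = wordOp z (2 * n - 1) α h} ∧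
        adj (z i) v ∈ Submodule.span ℂ
            {v : H | ∃ (α : ℕ → ℕ) (h : H), h ∈ K ∧ v = wordOp z (2 * n - 1) α h} := by
  intro i hi1 hi2 v hv
  exact ⟨zmap q n z K hz hn hK2 i hi1 hi2 v hv,
    Badj q n z K hz hn hK1 hK2 (2 * n - i) i hi1 hi2 rfl v hv⟩
end
end

section
/- Let z_1,…,z_{2n} be a representation of the quantum quaternion sphere relations on a complex Hilbert space H, and let [z_n, z_{n+1}] = z_n z_{n+1} − z_{n+1} z_n denote the commutator. Then for every i > n and every integer m ≥ 0, one has z_i* [z_n, z_{n+1}]^m = q^{2m} [z_n, z_{n+1}]^m z_i*. -/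
noncomputable section

variable {H : Type*} [NormedAddCommGroup H] [InnerProductSpace ℂ H] [CompleteSpace H]

lemma qqs_key (q : ℝ) (n : ℕ) (hn : 1 ≤ n) (z : ℕ → H →L[ℂ] H) (hz : QQSRep q n z)
    (i : ℕ) (hi1 : n < i) (hi2 : i ≤ 2 * n) :
    adj (z i) * (z n * z (n + 1) - z (n + 1) * z n)
      = ((q : ℂ) ^ 2) • ((z n * z (n + 1) - z (n + 1) * z n) * adj (z i)) := by
  rcases eq_or_lt_of_le (Nat.succ_le_of_lt hi1) with hieq | hgt
  · -- i = n + 1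
    subst hieq
    have hdual : dualIdx n (n + 1) = n := by unfold dualIdx; omega
    have h3 := hz.r3 (n + 1) (by omega) (by omega)
    rw [hdual] at h3
    have h6 := hz.r6 (n + 1) (by omega) (by omega)
    set T := adj (z (n + 1)) with hT
    set A := z n with hA
    set B := z (n + 1) with hB
    set c : ℂ := ((1 - q ^ 2 : ℝ) : ℂ) with hc
    set S : H →L[ℂ] H := ∑ k ∈ Finset.Ioc (n + 1) (2 * n), z k * adj (z k) with hS
    -- q^2 • (A * S) = S * A
    have hSA : S * A = ((q : ℂ) ^ 2) • (A * S) := by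
      rw [hS, Finset.sum_mul, Finset.mul_sum, Finset.smul_sum]
      refine Finset.sum_congr rfl fun k hk => ?_
      simp only [Finset.mem_Ioc] at hk
      have hk1 : z k * z n = (q : ℂ) • (z n * z k) :=
        hz.r1 k n hn (by omega) hk.2 (by omega)
      have hk2 : adj (z k) * z n = (q : ℂ) • (z n * adj (z k)) :=
        hz.r4 k n (by omega) hk.2 hn (by omega) (by omega) (by omega)
      rw [hA, mul_assoc, hk2, mul_smul_comm, ← mul_assoc, hk1, smul_mul_assoc,
        smul_smul, mul_assoc, sq]
    have hTAB : T * (A * B) = ((q : ℂ) ^ 2) • (A * B * T) + ((q : ℂ) ^ 2 * c) • (A * S) := by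
      rw [← mul_assoc, h3, smul_mul_assoc, mul_assoc, h6, mul_add, mul_smul_comm,
        smul_add, smul_smul, ← mul_assoc]
    have hTBA : T * (B * A) = ((q : ℂ) ^ 2) • (B * A * T) + ((q : ℂ) ^ 2 * c) • (A * S) := by
      rw [← mul_assoc, h6, add_mul, smul_mul_assoc, hSA, mul_assoc, h3, mul_smul_comm,
        ← mul_assoc, smul_smul, mul_comm c]
    rw [mul_sub, hTAB, hTBA, sub_mul, smul_sub]
    abel
  · -- i ≥ n + 2
    have h1 : adj (z i) * z n = (q : ℂ) • (z n * adj (z i)) :=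
      hz.r4 i n (by omega) hi2 hn (by omega) (by omega) (by omega)
    have h2 : adj (z i) * z (n + 1) = (q : ℂ) • (z (n + 1) * adj (z i)) :=
      hz.r4 i (n + 1) (by omega) hi2 (by omega) (by omega) (by omega) (by omega)
    rw [mul_sub, sub_mul, smul_sub, ← mul_assoc, ← mul_assoc, h1, h2, smul_mul_assoc,
      smul_mul_assoc, mul_assoc, mul_assoc, h1, h2, mul_smul_comm, mul_smul_comm,
      smul_smul, smul_smul, ← mul_assoc, ← mul_assoc, sq]

theorem stmt_15 (q : ℝ) (hq0 : 0 < q) (hq1 : q < 1) (n : ℕ) (hn : 1 ≤ n)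
    (z : ℕ → H →L[ℂ] H) (hz : QQSRep q n z) :
    ∀ i, n < i → i ≤ 2 * n → ∀ m : ℕ,
      adj (z i) * (z n * z (n + 1) - z (n + 1) * z n) ^ m
        = ((q : ℂ) ^ (2 * m)) •
            ((z n * z (n + 1) - z (n + 1) * z n) ^ m * adj (z i)) := by
  intro i hi1 hi2 m
  induction m with
  | zero => simp
  | succ m ih =>
      rw [pow_succ, ← mul_assoc, ih, smul_mul_assoc, mul_assoc,
        qqs_key q n hn z hz i hi1 hi2, mul_smul_comm, smul_smul, ← mul_assoc,
        ← pow_add]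
      ring_nf
end
end

section
/- Fix an integer k with 1 ≤ k ≤ 2n and a complex number t with |t| = 1. Let z_1,…,z_{2n} on H and z′_1,…,z′_{2n} on H′ be two irreducible representations of the quantum quaternion sphere relations on nonzero complex Hilbert spaces such that z_j = 0 and z′_j = 0 for all j with k < j ≤ 2n. Suppose there are unit vectors u ∈ ⋂_{i=1}^{k−1} ker z_i* with z_k u = t u, and u′ ∈ ⋂_{i=1}^{k−1} ker (z′_i)* with z′_k u′ = t u′. Then the two representations are unitarily equivalent: there exists a unitary operator U : H → H′ such that U z_i = z′_i U for every i ∈ {1,…,2n}. -/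
noncomputable section

variable {H : Type*} [NormedAddCommGroup H] [InnerProductSpace ℂ H] [CompleteSpace H]

namespace QQS19


abbrev Letter := ℕ × Bool
abbrev Word := List Letter

variable {E : Type*} [NormedAddCommGroup E] [InnerProductSpace ℂ E] [CompleteSpace E]

lemma adj_eq_star (T : E →L[ℂ] E) : adj T = star T := (ContinuousLinearMap.star_eq_adjoint T).symm

def letterOp (z : ℕ → E →L[ℂ] E) (l : Letter) : E →L[ℂ] E :=
  if l.2 then adj (z l.1) else z l.1

@[simp] lemma letterOp_false (z : ℕ → E →L[ℂ] E) (i : ℕ) : letterOp z (i, false) = z i := rfl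
@[simp] lemma letterOp_true (z : ℕ → E →L[ℂ] E) (i : ℕ) : letterOp z (i, true) = adj (z i) := rfl

def ev (z : ℕ → E →L[ℂ] E) : Word → (E →L[ℂ] E)
  | [] => 1
  | l :: w => letterOp z l * ev z w

@[simp] lemma ev_nil (z : ℕ → E →L[ℂ] E) : ev z [] = 1 := rfl
@[simp] lemma ev_cons (z : ℕ → E →L[ℂ] E) (l : Letter) (w : Word) :
    ev z (l :: w) = letterOp z l * ev z w := rfl

lemma ev_append (z : ℕ → E →L[ℂ] E) (v w : Word) : ev z (v ++ w) = ev z v * ev z w := by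
  induction v with
  | nil => simp
  | cons l v ih => simp [ih, mul_assoc]

def flipL (l : Letter) : Letter := (l.1, !l.2)

def starW (w : Word) : Word := (w.map flipL).reverse

lemma star_letterOp (z : ℕ → E →L[ℂ] E) (l : Letter) :
    star (letterOp z l) = letterOp z (flipL l) := by
  rcases l with ⟨i, b⟩
  cases b <;> simp [letterOp, flipL, adj, ContinuousLinearMap.star_eq_adjoint]

lemma star_ev (z : ℕ → E →L[ℂ] E) (w : Word) : star (ev z w) = ev z (starW w) := by
  induction w with
  | nil => simp [starW]
  | cons l w ih =>
      have : starW (l :: w) = starW w ++ [flipL l] := by simp [starW]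
      rw [this, ev_append]
      simp [star_mul, ih, star_letterOp]

def OKw (n : ℕ) (w : Word) : Prop := ∀ l ∈ w, 1 ≤ l.1 ∧ l.1 ≤ 2 * n

def nsc (w : Word) : ℕ := w.countP (fun l => !l.2)

def invc : Word → ℕ
  | [] => 0
  | l :: w => (if l.2 then nsc w else 0) + invc w

def meas (w : Word) : ℕ := w.length + invc w

lemma nsc_append (v w : Word) : nsc (v ++ w) = nsc v + nsc w := by
  simp [nsc, List.countP_append]

lemma invc_append (v w : Word) :
    invc (v ++ w) = invc v + invc w + (v.countP (fun l => l.2)) * nsc w := by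
  induction v with
  | nil => simp [invc]
  | cons l v ih =>
      rcases l with ⟨i, b⟩
      cases b <;> simp [invc, ih, List.countP_cons, nsc_append] <;> ring

lemma meas_swap (A B : Word) (a b x y : ℕ) :
    meas (A ++ (x, false) :: (y, true) :: B) + 1 = meas (A ++ (a, true) :: (b, false) :: B) := by
  have h1 : ((x, false) : Letter) :: (y, true) :: B = [((x,false) : Letter), (y,true)] ++ B := rfl
  have h2 : ((a, true) : Letter) :: (b, false) :: B = [((a,true) : Letter), (b,false)] ++ B := rfl
  simp only [meas, h1, h2, invc_append, List.length_append, nsc_append]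
  simp [invc, nsc, List.countP_cons]
  ring

lemma meas_cons (l : Letter) (w : Word) : meas w < meas (l :: w) := by
  rcases l with ⟨i, b⟩
  cases b <;> simp [meas, invc] <;> omega

lemma meas_concat (w : Word) (l : Letter) : meas w < meas (w ++ [l]) := by
  simp only [meas, invc_append, List.length_append, List.length_singleton]
  omega

lemma OKw_nil (n : ℕ) : OKw n [] := by intro l hl; simp at hl


end QQS19

namespace QQS19

variable {E : Type*} [NormedAddCommGroup E] [InnerProductSpace ℂ E] [CompleteSpace E]

lemma ev_mid (z : ℕ → E →L[ℂ] E) (A B : Word) (l1 l2 : Letter) :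
    ev z (A ++ l1 :: l2 :: B) = ev z A * ((letterOp z l1 * letterOp z l2) * ev z B) := by
  rw [ev_append]; simp [mul_assoc]

variable {q : ℝ} {n : ℕ} {z : ℕ → E →L[ℂ] E}

lemma step3 (hz : QQSRep q n z) (A B : Word) (a b : ℕ) (ha1 : 1 ≤ a) (ha2 : a ≤ 2 * n)
    (hab : a + b = 2 * n + 1) :
    ev z (A ++ (a, true) :: (b, false) :: B)
      = ((q : ℂ) ^ 2) • ev z (A ++ (b, false) :: (a, true) :: B) := by
  have hb : b = dualIdx n a := by simp only [dualIdx]; omega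
  subst hb
  simp only [ev_mid, letterOp_true, letterOp_false]
  rw [hz.r3 a ha1 ha2]
  simp [smul_mul_assoc, mul_smul_comm]

lemma step4 (hz : QQSRep q n z) (A B : Word) (a b : ℕ) (ha1 : 1 ≤ a) (ha2 : a ≤ 2 * n)
    (hb1 : 1 ≤ b) (hb2 : b ≤ 2 * n) (hab : 2 * n + 1 < a + b) (hne : a ≠ b) :
    ev z (A ++ (a, true) :: (b, false) :: B)
      = (q : ℂ) • ev z (A ++ (b, false) :: (a, true) :: B) := by
  simp only [ev_mid, letterOp_true, letterOp_false]
  rw [hz.r4 a b ha1 ha2 hb1 hb2 hab hne]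
  simp [smul_mul_assoc, mul_smul_comm]

lemma step5 (hz : QQSRep q n z) (A B : Word) (a b : ℕ) (ha1 : 1 ≤ a) (hb1 : 1 ≤ b)
    (hab : a + b < 2 * n + 1) (hne : a ≠ b) :
    ev z (A ++ (a, true) :: (b, false) :: B)
      = (q : ℂ) • ev z (A ++ (b, false) :: (a, true) :: B)
        + (((1 - q ^ 2 : ℝ) : ℂ) * ((epsIdx n a * epsIdx n b : ℤ) : ℂ)
            * (q : ℂ) ^ (rhoIdx n a + rhoIdx n b)) •
          ev z (A ++ (dualIdx n a, false) :: (dualIdx n b, true) :: B) := by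
  simp only [ev_mid, letterOp_true, letterOp_false]
  rw [hz.r5 a b ha1 hb1 hab hne]
  simp [smul_mul_assoc, mul_smul_comm, add_mul, mul_add]

lemma step6 (hz : QQSRep q n z) (A B : Word) (a : ℕ) (han : n < a) (ha2 : a ≤ 2 * n) :
    ev z (A ++ (a, true) :: (a, false) :: B)
      = ev z (A ++ (a, false) :: (a, true) :: B)
        + ((1 - q ^ 2 : ℝ) : ℂ) • ∑ j ∈ Finset.Ioc a (2 * n),
            ev z (A ++ (j, false) :: (j, true) :: B) := by
  simp only [ev_mid, letterOp_true, letterOp_false]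
  rw [hz.r6 a han ha2]
  simp [smul_mul_assoc, mul_smul_comm, add_mul, mul_add, Finset.sum_mul, Finset.mul_sum,
    Finset.smul_sum]

lemma step7 (hz : QQSRep q n z) (A B : Word) (a : ℕ) (ha1 : 1 ≤ a) (han : a ≤ n) :
    ev z (A ++ (a, true) :: (a, false) :: B)
      = ev z (A ++ (a, false) :: (a, true) :: B)
        + (((1 - q ^ 2 : ℝ) : ℂ) * (q : ℂ) ^ (2 * rhoIdx n a)) •
            ev z (A ++ (dualIdx n a, false) :: (dualIdx n a, true) :: B)
        + ((1 - q ^ 2 : ℝ) : ℂ) • ∑ j ∈ Finset.Ioc a (2 * n),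
            ev z (A ++ (j, false) :: (j, true) :: B) := by
  simp only [ev_mid, letterOp_true, letterOp_false]
  rw [hz.r7 a ha1 han]
  simp [smul_mul_assoc, mul_smul_comm, add_mul, mul_add, Finset.sum_mul, Finset.mul_sum,
    Finset.smul_sum]

end QQS19
namespace QQS19

variable {E : Type*} [NormedAddCommGroup E] [InnerProductSpace ℂ E] [CompleteSpace E]
variable {q : ℝ} {n : ℕ} {z : ℕ → E →L[ℂ] E}

local notation "⟪" x ", " y "⟫" => @inner ℂ _ _ x y

lemma dualIdx_bounds {n a : ℕ} (ha1 : 1 ≤ a) (ha2 : a ≤ 2 * n) :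
    1 ≤ dualIdx n a ∧ dualIdx n a ≤ 2 * n := by
  simp only [dualIdx]; omega

lemma adj_zero : adj (0 : E →L[ℂ] E) = 0 := by
  simp [adj, map_zero]

lemma zk_normal (hz : QQSRep q n z) {k : ℕ} (hk1 : 1 ≤ k) (hk2 : k ≤ 2 * n)
    (hzero : ∀ j, k < j → j ≤ 2 * n → z j = 0) :
    adj (z k) * z k = z k * adj (z k) := by
  have hsum : ∑ j ∈ Finset.Ioc k (2 * n), z j * adj (z j) = 0 := by
    apply Finset.sum_eq_zero
    intro j hj
    rw [Finset.mem_Ioc] at hj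
    rw [hzero j hj.1 hj.2]; simp
  rcases le_or_gt k n with h | h
  · have hd : z (dualIdx n k) = 0 := by
      apply hzero
      · simp only [dualIdx]; omega
      · simp only [dualIdx]; omega
    rw [hz.r7 k hk1 h, hd, hsum]; simp
  · rw [hz.r6 k h hk2, hsum]; simp

lemma adj_zk_u (hz : QQSRep q n z) {k : ℕ} (hk1 : 1 ≤ k) (hk2 : k ≤ 2 * n)
    (hzero : ∀ j, k < j → j ≤ 2 * n → z j = 0) {u : E} {t : ℂ}
    (hut : z k u = t • u) :
    adj (z k) u = (starRingEnd ℂ t) • u := by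
  set M : E →L[ℂ] E := z k - t • 1 with hM
  have hMu : M u = 0 := by
    simp [hM, ContinuousLinearMap.sub_apply, hut]
  have hs : star (z k) * z k = z k * star (z k) := by
    rw [← adj_eq_star]; exact zk_normal hz hk1 hk2 hzero
  have hstarM : star M = adj (z k) - (starRingEnd ℂ t) • 1 := by
    simp [hM, star_sub, star_smul, adj_eq_star]
  have hnormal : M * star M = star M * M := by
    rw [hstarM, hM, adj_eq_star]
    simp only [mul_sub, sub_mul, smul_mul_assoc, mul_smul_comm, smul_smul, smul_sub,
      one_mul, mul_one]
    rw [hs, mul_comm ((starRingEnd ℂ) t) t]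
    abel
  have h0 : ⟪star M u, star M u⟫ = 0 := by
    have h1 : ⟪star M u, star M u⟫ = ⟪u, M (star M u)⟫ := by
      rw [ContinuousLinearMap.star_eq_adjoint]
      exact ContinuousLinearMap.adjoint_inner_left M (ContinuousLinearMap.adjoint M u) u
    rw [h1]
    have : M (star M u) = (M * star M) u := rfl
    rw [this, hnormal]
    have : (star M * M) u = star M (M u) := rfl
    rw [this, hMu, map_zero, inner_zero_right]
  have hMsu : star M u = 0 := by
    rwa [inner_self_eq_zero] at h0
  rw [hstarM] at hMsu
  have := sub_eq_zero.mp (by simpa [ContinuousLinearMap.sub_apply] using hMsu)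
  simpa using this

end QQS19
namespace QQS19

variable {E : Type*} [NormedAddCommGroup E] [InnerProductSpace ℂ E] [CompleteSpace E]

lemma find_tf : ∀ (w : Word) (hw : w ≠ []), (w.head hw).2 = true → (w.getLast hw).2 = false →
    ∃ A a b B, w = A ++ (a, true) :: (b, false) :: B := by
  intro w
  induction w with
  | nil => simp
  | cons l v ih =>
    intro _ hh hl
    cases v with
    | nil =>
      simp only [List.head_cons] at hh
      simp only [List.getLast_singleton] at hl
      rw [hh] at hl; cases hl
    | cons m v' =>
      by_cases hm : m.2 = true
      · have hl' : ((m :: v').getLast (by simp)).2 = false := by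
          rwa [List.getLast_cons (by simp)] at hl
        obtain ⟨A, a, b, B, hAB⟩ := ih (by simp) (by simpa using hm) hl'
        exact ⟨l :: A, a, b, B, by rw [List.cons_append, ← hAB]⟩
      · rcases l with ⟨a, sa⟩
        rcases m with ⟨b, sb⟩
        simp only [List.head_cons] at hh
        have hsb : sb = false := by simpa using hm
        exact ⟨[], a, b, v', by rw [hh, hsb]; rfl⟩

lemma OKw_decomp {n : ℕ} {A B : Word} {a b : ℕ} {sa sb : Bool}
    (h : OKw n (A ++ (a, sa) :: (b, sb) :: B)) :
    OKw n A ∧ (1 ≤ a ∧ a ≤ 2 * n) ∧ (1 ≤ b ∧ b ≤ 2 * n) ∧ OKw n B := by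
  refine ⟨fun l hl => h l (by simp [hl]), h (a, sa) (by simp), h (b, sb) (by simp), 
    fun l hl => h l (by simp [hl])⟩

lemma OKw_mid {n : ℕ} {A B : Word} (hA : OKw n A) (hB : OKw n B) {x y : ℕ} {sx sy : Bool}
    (hx : 1 ≤ x ∧ x ≤ 2 * n) (hy : 1 ≤ y ∧ y ≤ 2 * n) :
    OKw n (A ++ (x, sx) :: (y, sy) :: B) := by
  intro l hl
  rcases List.mem_append.mp hl with h | h
  · exact hA l h
  · simp only [List.mem_cons] at h
    rcases h with h | h | h
    · rw [h]; exact hx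
    · rw [h]; exact hy
    · exact hB l h

end QQS19
namespace QQS19

variable {E₁ E₂ : Type*} [NormedAddCommGroup E₁] [InnerProductSpace ℂ E₁] [CompleteSpace E₁]
  [NormedAddCommGroup E₂] [InnerProductSpace ℂ E₂] [CompleteSpace E₂]

local notation "⟪" x ", " y "⟫" => @inner ℂ _ _ x y

lemma inner_adj_left {E : Type*} [NormedAddCommGroup E] [InnerProductSpace ℂ E]
    [CompleteSpace E] (A : E →L[ℂ] E) (x y : E) : ⟪adj A y, x⟫ = ⟪y, A x⟫ :=
  ContinuousLinearMap.adjoint_inner_left A x y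

lemma moments {q : ℝ} {n k : ℕ} (hk1 : 1 ≤ k) (hk2 : k ≤ 2 * n)
    {z : ℕ → E₁ →L[ℂ] E₁} {z' : ℕ → E₂ →L[ℂ] E₂}
    (hz : QQSRep q n z) (hz' : QQSRep q n z')
    (hzero : ∀ j, k < j → j ≤ 2 * n → z j = 0)
    (hzero' : ∀ j, k < j → j ≤ 2 * n → z' j = 0)
    {u : E₁} {u' : E₂} (hu : ‖u‖ = 1) (hu' : ‖u'‖ = 1)
    (huk : ∀ i, 1 ≤ i → i ≤ k - 1 → adj (z i) u = 0)
    (huk' : ∀ i, 1 ≤ i → i ≤ k - 1 → adj (z' i) u' = 0)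
    {t : ℂ} (hut : z k u = t • u) (hut' : z' k u' = t • u') :
    ∀ N (w : Word), OKw n w → meas w ≤ N → ⟪u, ev z w u⟫ = ⟪u', ev z' w u'⟫ := by
  have hadj : adj (z k) u = (starRingEnd ℂ t) • u := adj_zk_u hz hk1 hk2 hzero hut
  have hadj' : adj (z' k) u' = (starRingEnd ℂ t) • u' := adj_zk_u hz' hk1 hk2 hzero' hut'
  intro N
  induction N with
  | zero =>
    intro w hOK hm
    have hw : w = [] := by
      cases w with
      | nil => rfl
      | cons l v => exfalso; simp [meas] at hm
    subst hw
    simp [inner_self_eq_norm_sq_to_K, hu, hu']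
  | succ N IH =>
    intro w hOK hm
    cases w with
    | nil => simp [inner_self_eq_norm_sq_to_K, hu, hu']
    | cons l v =>
      obtain ⟨i, si⟩ := l
      have hiOK := hOK (i, si) (by simp)
      cases si with
      | false =>
        have hOKv : OKw n v := fun l hl => hOK l (by simp [hl])
        have hmv : meas v ≤ N := by
          have := meas_cons ((i, false) : Letter) v; omega
        have e1 : ev z ((i, false) :: v) u = z i (ev z v u) := rfl
        have e1' : ev z' ((i, false) :: v) u' = z' i (ev z' v u') := rfl
        rcases lt_trichotomy i k with h | h | h
        · rw [e1, e1', ← inner_adj_left (z i) (ev z v u) u,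
            ← inner_adj_left (z' i) (ev z' v u') u',
            huk i hiOK.1 (by omega), huk' i hiOK.1 (by omega),
            inner_zero_left, inner_zero_left]
        · subst h
          rw [e1, e1', ← inner_adj_left (z i) (ev z v u) u,
            ← inner_adj_left (z' i) (ev z' v u') u', hadj, hadj',
            inner_smul_left, inner_smul_left, IH v hOKv hmv]
        · rw [e1, e1', hzero i h hiOK.2, hzero' i h hiOK.2]
          simp
      | true =>
        rcases e : ((i, true) :: v : Word).getLast (List.cons_ne_nil _ _) with ⟨j, b⟩
        cases b with
        | true =>
          set D := ((i, true) :: v : Word).dropLast with hD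
          have hsplit : ((i, true) :: v : Word) = D ++ [(j, true)] := by
            conv_lhs => rw [← List.dropLast_append_getLast (l := (i, true) :: v) (by simp)]
            rw [e]
          have hOKD : OKw n D := fun l hl =>
            hOK l (by rw [hsplit]; exact List.mem_append.mpr (Or.inl hl))
          have hjOK : 1 ≤ j ∧ j ≤ 2 * n := by
            have hmem : ((j, true) : Letter) ∈ ((i, true) :: v : Word) := by
              rw [← e]; exact List.getLast_mem _
            exact hOK _ hmem
          have hmD : meas D ≤ N := by
            have := meas_concat D ((j, true) : Letter)
            rw [← hsplit] at this; omega
          have e2 : ev z ((i, true) :: v) u = ev z D (adj (z j) u) := by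
            rw [hsplit, ev_append]; simp [ContinuousLinearMap.mul_apply]
          have e2' : ev z' ((i, true) :: v) u' = ev z' D (adj (z' j) u') := by
            rw [hsplit, ev_append]; simp [ContinuousLinearMap.mul_apply]
          rcases lt_trichotomy j k with h | h | h
          · rw [e2, e2', huk j hjOK.1 (by omega), huk' j hjOK.1 (by omega)]
            simp
          · subst h
            rw [e2, e2', hadj, hadj', map_smul, map_smul, inner_smul_right,
              inner_smul_right, IH D hOKD hmD]
          · rw [e2, e2', hzero j h hjOK.2, hzero' j h hjOK.2]
            simp [adj_zero]
        | false =>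
          obtain ⟨A, a, b, B, hw⟩ := find_tf ((i, true) :: v) (by simp) (by simp) (by rw [e])
          rw [hw] at hOK hm ⊢
          obtain ⟨hOKA, haOK, hbOK, hOKB⟩ := OKw_decomp hOK
          rcases eq_or_ne a b with hab | hab
          · subst hab
            have hd := dualIdx_bounds haOK.1 haOK.2
            rcases le_or_gt a n with h | h
            · rw [step7 hz A B a haOK.1 h, step7 hz' A B a haOK.1 h]
              simp only [ContinuousLinearMap.add_apply, ContinuousLinearMap.smul_apply,
                ContinuousLinearMap.sum_apply, inner_add_right, inner_smul_right, inner_sum]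
              rw [IH _ (OKw_mid hOKA hOKB haOK haOK)
                    (by have := meas_swap A B a a a a; omega),
                  IH _ (OKw_mid hOKA hOKB hd hd)
                    (by have := meas_swap A B a a (dualIdx n a) (dualIdx n a); omega)]
              congr 2
              apply Finset.sum_congr rfl
              intro j hj
              rw [Finset.mem_Ioc] at hj
              rw [IH _ (OKw_mid hOKA hOKB ⟨by omega, hj.2⟩ ⟨by omega, hj.2⟩)
                    (by have := meas_swap A B a a j j; omega)]
            · rw [step6 hz A B a h haOK.2, step6 hz' A B a h haOK.2]
              simp only [ContinuousLinearMap.add_apply, ContinuousLinearMap.smul_apply,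
                ContinuousLinearMap.sum_apply, inner_add_right, inner_smul_right, inner_sum]
              rw [IH _ (OKw_mid hOKA hOKB haOK haOK)
                    (by have := meas_swap A B a a a a; omega)]
              congr 2
              apply Finset.sum_congr rfl
              intro j hj
              rw [Finset.mem_Ioc] at hj
              rw [IH _ (OKw_mid hOKA hOKB ⟨by omega, hj.2⟩ ⟨by omega, hj.2⟩)
                    (by have := meas_swap A B a a j j; omega)]
          · rcases lt_trichotomy (a + b) (2 * n + 1) with h | h | h
            · rw [step5 hz A B a b haOK.1 hbOK.1 h hab, step5 hz' A B a b haOK.1 hbOK.1 h hab]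
              have hda := dualIdx_bounds haOK.1 haOK.2
              have hdb := dualIdx_bounds hbOK.1 hbOK.2
              simp only [ContinuousLinearMap.add_apply, ContinuousLinearMap.smul_apply,
                inner_add_right, inner_smul_right]
              rw [IH _ (OKw_mid hOKA hOKB hbOK haOK)
                    (by have := meas_swap A B a b b a; omega),
                  IH _ (OKw_mid hOKA hOKB hda hdb)
                    (by have := meas_swap A B a b (dualIdx n a) (dualIdx n b); omega)]
            · rw [step3 hz A B a b haOK.1 haOK.2 h, step3 hz' A B a b haOK.1 haOK.2 h]
              simp only [ContinuousLinearMap.smul_apply, inner_smul_right]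
              rw [IH _ (OKw_mid hOKA hOKB hbOK haOK)
                    (by have := meas_swap A B a b b a; omega)]
            · rw [step4 hz A B a b haOK.1 haOK.2 hbOK.1 hbOK.2 h hab,
                  step4 hz' A B a b haOK.1 haOK.2 hbOK.1 hbOK.2 h hab]
              simp only [ContinuousLinearMap.smul_apply, inner_smul_right]
              rw [IH _ (OKw_mid hOKA hOKB hbOK haOK)
                    (by have := meas_swap A B a b b a; omega)]

end QQS19
namespace QQS19

variable {E : Type*} [NormedAddCommGroup E] [InnerProductSpace ℂ E] [CompleteSpace E]

abbrev Wd (n : ℕ) : Type := {w : Word // OKw n w}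

def Lmap (z : ℕ → E →L[ℂ] E) (u : E) (n : ℕ) : (Wd n →₀ ℂ) →ₗ[ℂ] E :=
  Finsupp.linearCombination ℂ (fun w : Wd n => ev z w.1 u)

def consW (n i : ℕ) (si : Bool) (hi : 1 ≤ i ∧ i ≤ 2 * n) (w : Wd n) : Wd n :=
  ⟨(i, si) :: w.1, by
    intro l hl
    rcases List.mem_cons.mp hl with h | h
    · rw [h]; exact hi
    · exact w.2 l h⟩

lemma L_cons (z : ℕ → E →L[ℂ] E) (u : E) {n i : ℕ} {si : Bool} (hi : 1 ≤ i ∧ i ≤ 2 * n)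
    (x : Wd n →₀ ℂ) :
    letterOp z (i, si) (Lmap z u n x) = Lmap z u n (Finsupp.mapDomain (consW n i si hi) x) := by
  have h1 := Finsupp.apply_linearCombination ℂ ((letterOp z (i, si)).toLinearMap)
    (fun w : Wd n => ev z w.1 u) x
  have h2 := Finsupp.linearCombination_mapDomain ℂ
    (v' := fun w : Wd n => ev z w.1 u) (consW n i si hi) x
  calc letterOp z (i, si) (Lmap z u n x)
      = ((letterOp z (i, si)).toLinearMap) ((Finsupp.linearCombination ℂ
          (fun w : Wd n => ev z w.1 u)) x) := rfl
    _ = (Finsupp.linearCombination ℂ (⇑(letterOp z (i, si)) ∘ fun w : Wd n => ev z w.1 u)) x := h1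
    _ = (Finsupp.linearCombination ℂ ((fun w : Wd n => ev z w.1 u) ∘ consW n i si hi)) x := rfl
    _ = Lmap z u n (Finsupp.mapDomain (consW n i si hi) x) := h2.symm

lemma OKw_append {n : ℕ} {v w : Word} (hv : OKw n v) (hw : OKw n w) : OKw n (v ++ w) := by
  intro l hl
  rcases List.mem_append.mp hl with h | h
  · exact hv l h
  · exact hw l h

lemma OKw_starW {n : ℕ} {w : Word} (h : OKw n w) : OKw n (starW w) := by
  intro l hl
  simp only [starW, List.mem_reverse, List.mem_map] at hl
  obtain ⟨m, hm, rfl⟩ := hl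
  simpa [flipL] using h m hm

lemma dense_L {n : ℕ} (z : ℕ → E →L[ℂ] E) (hirr : QQSIrreducible n z) (u : E) (hune : u ≠ 0) :
    Dense ((LinearMap.range (Lmap z u n) : Submodule ℂ E) : Set E) := by
  set R := LinearMap.range (Lmap z u n) with hR
  have hinv : ∀ (i : ℕ) (si : Bool), 1 ≤ i → i ≤ 2 * n → ∀ h ∈ R, letterOp z (i, si) h ∈ R := by
    rintro i si h1 h2 h ⟨x, rfl⟩
    exact ⟨Finsupp.mapDomain (consW n i si ⟨h1, h2⟩) x, (L_cons z u ⟨h1, h2⟩ x).symm⟩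
  have hKinv : ∀ i, 1 ≤ i → i ≤ 2 * n → ∀ h ∈ R.topologicalClosure,
      z i h ∈ R.topologicalClosure ∧ adj (z i) h ∈ R.topologicalClosure := by
    intro i h1 h2 h hh
    have hh' : h ∈ closure (R : Set E) := by
      rw [← Submodule.topologicalClosure_coe]; exact hh
    constructor
    · have : z i h ∈ closure (R : Set E) :=
        map_mem_closure (z i).continuous hh' (fun x hx => hinv i false h1 h2 x hx)
      rwa [← SetLike.mem_coe, Submodule.topologicalClosure_coe]
    · have : adj (z i) h ∈ closure (R : Set E) :=
        map_mem_closure (adj (z i)).continuous hh' (fun x hx => hinv i true h1 h2 x hx)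
      rwa [← SetLike.mem_coe, Submodule.topologicalClosure_coe]
  have huR : u ∈ R := by
    refine ⟨Finsupp.single ⟨[], OKw_nil n⟩ 1, ?_⟩
    simp [Lmap, Finsupp.linearCombination_single]
  rcases hirr R.topologicalClosure (Submodule.isClosed_topologicalClosure R) hKinv with hbot | htop
  · exfalso
    have : u ∈ R.topologicalClosure := R.le_topologicalClosure huR
    rw [hbot] at this
    exact hune (by simpa using this)
  · have hcl : closure (R : Set E) = Set.univ := by
      rw [← Submodule.topologicalClosure_coe, htop]; simp
    rw [dense_iff_closure_eq]; exact hcl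

end QQS19

open QQS19
theorem stmt_19 (q : ℝ) (hq0 : 0 < q) (hq1 : q < 1) (n : ℕ) (hn : 1 ≤ n)
    (k : ℕ) (hk1 : 1 ≤ k) (hk2 : k ≤ 2 * n) (t : ℂ) (ht : ‖t‖ = 1)
    {H₁ H₂ : Type*}
    [NormedAddCommGroup H₁] [InnerProductSpace ℂ H₁] [CompleteSpace H₁] [Nontrivial H₁]
    [NormedAddCommGroup H₂] [InnerProductSpace ℂ H₂] [CompleteSpace H₂] [Nontrivial H₂]
    (z : ℕ → H₁ →L[ℂ] H₁) (z' : ℕ → H₂ →L[ℂ] H₂)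
    (hz : QQSRep q n z) (hz' : QQSRep q n z')
    (hirr : QQSIrreducible n z) (hirr' : QQSIrreducible n z')
    (hzero : ∀ j, k < j → j ≤ 2 * n → z j = 0)
    (hzero' : ∀ j, k < j → j ≤ 2 * n → z' j = 0)
    (u : H₁) (hu : ‖u‖ = 1)
    (huk : ∀ i, 1 ≤ i → i ≤ k - 1 → adj (z i) u = 0)
    (hut : z k u = t • u)
    (u' : H₂) (hu' : ‖u'‖ = 1)
    (huk' : ∀ i, 1 ≤ i → i ≤ k - 1 → adj (z' i) u' = 0)
    (hut' : z' k u' = t • u') :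
    ∃ U : H₁ ≃ₗᵢ[ℂ] H₂, ∀ i, 1 ≤ i → i ≤ 2 * n → ∀ h : H₁,
      U (z i h) = z' i (U h) := by
  classical
  -- single-word moment equality
  have hss : ∀ v w : Wd n,
      (inner ℂ (ev z v.1 u) (ev z w.1 u) : ℂ) = inner ℂ (ev z' v.1 u') (ev z' w.1 u') := by
    intro v w
    have h1 : (inner ℂ (ev z v.1 u) (ev z w.1 u) : ℂ)
        = inner ℂ u (ev z (starW v.1 ++ w.1) u) := by
      calc (inner ℂ (ev z v.1 u) (ev z w.1 u) : ℂ)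
          = inner ℂ u (ContinuousLinearMap.adjoint (ev z v.1) (ev z w.1 u)) :=
            (ContinuousLinearMap.adjoint_inner_right _ _ _).symm
        _ = inner ℂ u (ev z (starW v.1 ++ w.1) u) := by
            rw [ev_append, ← star_ev, ContinuousLinearMap.star_eq_adjoint,
              ContinuousLinearMap.mul_apply]
    have h1' : (inner ℂ (ev z' v.1 u') (ev z' w.1 u') : ℂ)
        = inner ℂ u' (ev z' (starW v.1 ++ w.1) u') := by
      calc (inner ℂ (ev z' v.1 u') (ev z' w.1 u') : ℂ)
          = inner ℂ u' (ContinuousLinearMap.adjoint (ev z' v.1) (ev z' w.1 u')) :=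
            (ContinuousLinearMap.adjoint_inner_right _ _ _).symm
        _ = inner ℂ u' (ev z' (starW v.1 ++ w.1) u') := by
            rw [ev_append, ← star_ev, ContinuousLinearMap.star_eq_adjoint,
              ContinuousLinearMap.mul_apply]
    rw [h1, h1']
    exact moments hk1 hk2 hz hz' hzero hzero' hu hu' huk huk' hut hut'
      (meas (starW v.1 ++ w.1)) _ (OKw_append (OKw_starW v.2) w.2) le_rfl
  have hkey : ∀ x y : Wd n →₀ ℂ,
      (inner ℂ (Lmap z u n x) (Lmap z u n y) : ℂ) = inner ℂ (Lmap z' u' n x) (Lmap z' u' n y) := by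
    intro x y
    simp only [Lmap, Finsupp.linearCombination_apply, Finsupp.sum]
    rw [sum_inner, sum_inner]
    refine Finset.sum_congr rfl fun a _ => ?_
    rw [inner_sum, inner_sum]
    refine Finset.sum_congr rfl fun b _ => ?_
    rw [inner_smul_left, inner_smul_left, inner_smul_right, inner_smul_right, hss a b]
  have hnorm : ∀ x, ‖Lmap z u n x‖ = ‖Lmap z' u' n x‖ := by
    intro x
    rw [@norm_eq_sqrt_re_inner ℂ, @norm_eq_sqrt_re_inner ℂ, hkey]
  have hker : LinearMap.ker (Lmap z u n) ≤ LinearMap.ker (Lmap z' u' n) := by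
    intro x hx
    rw [LinearMap.mem_ker] at hx ⊢
    have := hnorm x
    rw [hx] at this
    simpa using this.symm
  set g0 : _ →ₗ[ℂ] H₂ := (LinearMap.ker (Lmap z u n)).liftQ (Lmap z' u' n) hker with hg0
  set e := (Lmap z u n).quotKerEquivRange with he
  set g : ↥(LinearMap.range (Lmap z u n)) →ₗ[ℂ] H₂ :=
    g0.comp (e.symm : ↥(LinearMap.range (Lmap z u n)) →ₗ[ℂ] _) with hgdef
  have hg : ∀ x : Wd n →₀ ℂ,
      g ⟨Lmap z u n x, LinearMap.mem_range_self _ x⟩ = Lmap z' u' n x := by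
    intro x
    have he1 : e (Submodule.Quotient.mk x) = ⟨Lmap z u n x, LinearMap.mem_range_self _ x⟩ := by
      apply Subtype.ext
      exact (Lmap z u n).quotKerEquivRange_apply_mk x
    have he2 : e.symm ⟨Lmap z u n x, LinearMap.mem_range_self _ x⟩ = Submodule.Quotient.mk x := by
      rw [← he1, LinearEquiv.symm_apply_apply]
    simp [hgdef, he2, hg0, Submodule.liftQ_apply]
  have hgnorm : ∀ y : ↥(LinearMap.range (Lmap z u n)), ‖g y‖ = ‖y‖ := by
    rintro ⟨-, x, rfl⟩
    rw [show (⟨Lmap z u n x, ⟨x, rfl⟩⟩ : ↥(LinearMap.range (Lmap z u n)))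
        = ⟨Lmap z u n x, LinearMap.mem_range_self _ x⟩ from rfl, hg]
    rw [← hnorm]
    rfl
  set F : ↥(LinearMap.range (Lmap z u n)) →ₗᵢ[ℂ] H₂ := ⟨g, hgnorm⟩ with hF
  have hune : u ≠ 0 := by intro h; rw [h] at hu; simp at hu
  have hune' : u' ≠ 0 := by intro h; rw [h] at hu'; simp at hu'
  have hdense : Dense ((LinearMap.range (Lmap z u n) : Submodule ℂ H₁) : Set H₁) :=
    dense_L z hirr u hune
  have hdense' : Dense ((LinearMap.range (Lmap z' u' n) : Submodule ℂ H₂) : Set H₂) :=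
    dense_L z' hirr' u' hune'
  have hdr : DenseRange ⇑((LinearMap.range (Lmap z u n)).subtypeL) := by
    have hr : Set.range ⇑((LinearMap.range (Lmap z u n)).subtypeL)
        = ((LinearMap.range (Lmap z u n) : Submodule ℂ H₁) : Set H₁) := Subtype.range_val
    rw [DenseRange, hr]
    exact hdense
  have hui : IsUniformInducing ⇑((LinearMap.range (Lmap z u n)).subtypeL) :=
    isometry_subtype_coe.isUniformInducing
  set U₀ : H₁ →L[ℂ] H₂ :=
    ContinuousLinearMap.extend F.toContinuousLinearMap
      (LinearMap.range (Lmap z u n)).subtypeL with hU₀def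
  have hU₀ : ∀ y : ↥(LinearMap.range (Lmap z u n)), U₀ (y : H₁) = g y := by
    intro y
    exact ContinuousLinearMap.extend_eq F.toContinuousLinearMap
      hdr hui y
  have hU₀L : ∀ x, U₀ (Lmap z u n x) = Lmap z' u' n x := by
    intro x
    have := hU₀ ⟨Lmap z u n x, LinearMap.mem_range_self _ x⟩
    exact this.trans (hg x)
  have hU₀norm : ∀ h : H₁, ‖U₀ h‖ = ‖h‖ := by
    have heq : Set.EqOn (fun h => ‖U₀ h‖) (fun h => ‖h‖)
        ((LinearMap.range (Lmap z u n) : Submodule ℂ H₁) : Set H₁) := by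
      rintro - ⟨x, rfl⟩
      show ‖U₀ (Lmap z u n x)‖ = ‖Lmap z u n x‖
      rw [hU₀L, ← hnorm]
    have hcl := heq.closure ((ContinuousLinearMap.continuous U₀).norm) continuous_norm
    intro h
    have : h ∈ closure ((LinearMap.range (Lmap z u n) : Submodule ℂ H₁) : Set H₁) := by
      rw [hdense.closure_eq]; trivial
    exact hcl this
  have hint : ∀ i, 1 ≤ i → i ≤ 2 * n → U₀.comp (z i) = (z' i).comp U₀ := by
    intro i h1 h2
    apply ContinuousLinearMap.ext_on
      (s := ((LinearMap.range (Lmap z u n) : Submodule ℂ H₁) : Set H₁))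
    · rw [Submodule.span_eq]; exact hdense
    · rintro - ⟨x, rfl⟩
      show U₀ (z i (Lmap z u n x)) = z' i (U₀ (Lmap z u n x))
      have hz1 : z i (Lmap z u n x)
          = Lmap z u n (Finsupp.mapDomain (consW n i false ⟨h1, h2⟩) x) :=
        L_cons (si := false) z u ⟨h1, h2⟩ x
      have hz2 : z' i (Lmap z' u' n x)
          = Lmap z' u' n (Finsupp.mapDomain (consW n i false ⟨h1, h2⟩) x) :=
        L_cons (si := false) z' u' ⟨h1, h2⟩ x
      rw [hz1, hU₀L, hU₀L, ← hz2]
  have hiso : Isometry ⇑U₀ := AddMonoidHomClass.isometry_of_norm U₀ hU₀norm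
  set Fli : H₁ →ₗᵢ[ℂ] H₂ := ⟨(U₀ : H₁ →ₗ[ℂ] H₂), hU₀norm⟩ with hFli
  have hsurj : Function.Surjective ⇑Fli := by
    have hclosed : IsClosed (Set.range ⇑U₀) := hiso.isClosedEmbedding.isClosed_range
    have hsub : ((LinearMap.range (Lmap z' u' n) : Submodule ℂ H₂) : Set H₂)
        ⊆ Set.range ⇑U₀ := by
      rintro - ⟨x, rfl⟩
      exact ⟨Lmap z u n x, hU₀L x⟩
    intro y
    have hy : y ∈ closure (Set.range ⇑U₀) := by
      have h1 : y ∈ closure ((LinearMap.range (Lmap z' u' n) : Submodule ℂ H₂) : Set H₂) := by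
        rw [hdense'.closure_eq]; trivial
      exact closure_mono hsub h1
    rw [hclosed.closure_eq] at hy
    exact hy
  refine ⟨LinearIsometryEquiv.ofSurjective Fli hsurj, ?_⟩
  intro i h1 h2 h
  have hcoe : ∀ v : H₁, (LinearIsometryEquiv.ofSurjective Fli hsurj) v = U₀ v := fun v => rfl
  rw [hcoe, hcoe]
  exact DFunLike.congr_fun (hint i h1 h2) h
end
end
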